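/- arXiv:1405.1933 — 4 statements merged into one kernel-verified Lean document; each statement's English description precedes it below -/
import Mathlib

section
/- For every λ ∈ ℂ with |λ| ≤ 5 and every ξ ∈ ℂ, the sequence (2^{−n} log⁺|Q_λ^{∘n}(ξ)|)_{n≥0} converges to a limit G_λ(ξ) which satisfies log|ξ| − log 6 ≤ G_λ(ξ) ≤ max(log 11, log|ξ| + log(11/6)). -/
open MeasureTheory Filter

/-- The quadratic polynomial `Q_λ(z) = λ z + z²`. -/
noncomputable def Q (lam : ℂ) (z : ℂ) : ℂ := lam * z + z ^ 2

/-- The filled Julia set of `Q_λ`: points with bounded forward orbit. -/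
def filledJulia (lam : ℂ) : Set ℂ :=
  {z : ℂ | ∃ M : ℝ, ∀ n : ℕ, ‖(Q lam)^[n] z‖ ≤ M}

/-- Planar Lebesgue area of a subset of `ℂ`, as a real number. -/
noncomputable def area (s : Set ℂ) : ℝ := (volume s).toReal

/-- The Green function `G_λ(z) = limsup_n 2^{-n} log⁺ |Q_λ^{∘n}(z)|`. -/
noncomputable def green (lam : ℂ) (z : ℂ) : ℝ :=
  Filter.limsup
    (fun n : ℕ => (2 : ℝ)⁻¹ ^ n * max (Real.log (‖(Q lam)^[n] z‖)) 0)
    Filter.atTop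

/-- A Böttcher parametrization for `Q_λ` on `{|w| > 1}`. -/
def IsBottcher (lam : ℂ) (ψ : ℂ → ℂ) (b : ℕ → ℂ) : Prop :=
  Set.InjOn ψ {w : ℂ | 1 < ‖w‖} ∧
  DifferentiableOn ℂ ψ {w : ℂ | 1 < ‖w‖} ∧
  (∀ w : ℂ, 1 < ‖w‖ →
    HasSum (fun k : ℕ => b (k + 1) / w ^ (k + 1)) (ψ w - w)) ∧
  (∀ w : ℂ, 1 < ‖w‖ → ψ (w ^ 2) = Q lam (ψ w)) ∧
  ψ '' {w : ℂ | 1 < ‖w‖} = (filledJulia lam)ᶜ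

section Aux

lemma log_le_log'' {x y : ℝ} (hx : 0 ≤ x) (hy : 1 ≤ y) (h : x ≤ y) :
    Real.log x ≤ Real.log y := by
  rcases hx.eq_or_lt with rfl | hx'
  · simpa using Real.log_nonneg hy
  · exact Real.log_le_log hx' h

lemma abs_Q (lam z : ℂ) :
    ‖Q lam z‖ = ‖z‖ * ‖lam + z‖ := by
  rw [show Q lam z = z * (lam + z) by unfold Q; ring, norm_mul]

lemma Q_up (lam : ℂ) (hlam : ‖lam‖ ≤ 5) (z : ℂ) :
    ‖Q lam z‖ ≤ ‖z‖ * (‖z‖ + 5) := by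
  rw [abs_Q]
  have h1 : ‖lam + z‖ ≤ ‖z‖ + 5 := by
    calc ‖lam + z‖ ≤ ‖lam‖ + ‖z‖ := norm_add_le _ _
    _ ≤ ‖z‖ + 5 := by linarith
  exact mul_le_mul_of_nonneg_left h1 (norm_nonneg z)

lemma Q_low (lam : ℂ) (hlam : ‖lam‖ ≤ 5) (z : ℂ) :
    ‖z‖ * (‖z‖ - 5) ≤ ‖Q lam z‖ := by
  rw [abs_Q]
  have h1 : ‖z‖ - 5 ≤ ‖lam + z‖ := by
    have h : ‖z‖ ≤ ‖lam + z‖ + ‖lam‖ := by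
      calc ‖z‖ = ‖(lam + z) + (-lam)‖ := by congr 1; ring
      _ ≤ ‖lam + z‖ + ‖-lam‖ := norm_add_le _ _
      _ = ‖lam + z‖ + ‖lam‖ := by simp
    linarith
  exact mul_le_mul_of_nonneg_left h1 (norm_nonneg z)

end Aux

theorem stmt4 (lam : ℂ) (hlam : ‖lam‖ ≤ 5) (ξ : ℂ) :
    Tendsto
      (fun n : ℕ => (2 : ℝ)⁻¹ ^ n * max (Real.log (‖(Q lam)^[n] ξ‖)) 0)
      atTop (nhds (green lam ξ)) ∧
    Real.log (‖ξ‖) - Real.log 6 ≤ green lam ξ ∧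
    green lam ξ ≤ max (Real.log 11) (Real.log (‖ξ‖) + Real.log (11 / 6)) := by
  set a : ℕ → ℝ := fun n => ‖(Q lam)^[n] ξ‖ with ha
  set u : ℕ → ℝ := fun n => (2 : ℝ)⁻¹ ^ n * max (Real.log (a n)) 0 with hu
  have ha0 : ∀ n, 0 ≤ a n := fun n => norm_nonneg _
  have hasucc : ∀ n, a (n + 1) = ‖Q lam ((Q lam)^[n] ξ)‖ := by
    intro n; simp [ha, Function.iterate_succ_apply']
  have haup : ∀ n, a (n + 1) ≤ a n * (a n + 5) := by
    intro n; rw [hasucc]; exact Q_up lam hlam _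
  have halow : ∀ n, a n * (a n - 5) ≤ a (n + 1) := by
    intro n; rw [hasucc]; exact Q_low lam hlam _
  have hξ0 : a 0 = ‖ξ‖ := by simp [ha]
  have hlog6 : (0:ℝ) ≤ Real.log 6 := Real.log_nonneg (by norm_num)
  have hlogc : (0:ℝ) ≤ Real.log (11/6) := Real.log_nonneg (by norm_num)
  have hpowpos : ∀ n : ℕ, (0:ℝ) < (2:ℝ)⁻¹ ^ n := fun n => pow_pos (by norm_num) n
  have hpowmul : ∀ n : ℕ, (2:ℝ)⁻¹ ^ n * (2:ℝ) ^ n = 1 := by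
    intro n; rw [inv_pow]; exact inv_mul_cancel₀ (pow_ne_zero n (by norm_num))
  -- growth above 6
  have hgrow : ∀ n, 6 ≤ a n → 6 ≤ a (n + 1) ∧
      2 * Real.log (a n) - Real.log 6 ≤ Real.log (a (n + 1)) := by
    intro n h6
    have hpos : 0 < a n := by linarith
    have hlow2 : a n ^ 2 / 6 ≤ a (n + 1) := by
      have : a n ^ 2 / 6 ≤ a n * (a n - 5) := by nlinarith
      linarith [halow n]
    have h6' : (6:ℝ) ≤ a n ^ 2 / 6 := by nlinarith
    constructor
    · linarith
    · have := Real.log_le_log (by positivity) hlow2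
      rw [Real.log_div (by positivity) (by norm_num), Real.log_pow] at this
      push_cast at this
      linarith
  -- convergence
  have hconv : ∃ L, Tendsto u atTop (nhds L) := by
    by_cases h : ∀ n, a n < 6
    · refine ⟨0, squeeze_zero (g := fun n => (2:ℝ)⁻¹ ^ n * Real.log 6) (fun n => ?_) (fun n => ?_) ?_⟩
      · exact mul_nonneg (le_of_lt (hpowpos n)) (le_max_right _ _)
      · show u n ≤ (2:ℝ)⁻¹ ^ n * Real.log 6
        refine mul_le_mul_of_nonneg_left ?_ (le_of_lt (hpowpos n))
        exact max_le (log_le_log'' (ha0 n) (by norm_num) (le_of_lt (h n))) hlog6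
      · have := tendsto_pow_atTop_nhds_zero_of_lt_one (by norm_num : (0:ℝ) ≤ 2⁻¹) (by norm_num : (2:ℝ)⁻¹ < 1)
        simpa using this.mul_const (Real.log 6)
    · push_neg at h
      obtain ⟨N, hN⟩ := h
      have habove : ∀ n, 6 ≤ a (N + n) := by
        intro n
        induction n with
        | zero => simpa using hN
        | succ k ih => exact (hgrow (N + k) ih).1
      have hmax : ∀ n, 6 ≤ a n → max (Real.log (a n)) 0 = Real.log (a n) := by
        intro n h6
        exact max_eq_left (Real.log_nonneg (by linarith))
      have hdiff : ∀ n, |u (N + n + 1) - u (N + n)| ≤ (2:ℝ)⁻¹ ^ (N + n + 1) * Real.log 6 := by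
        intro n
        set m := N + n with hm
        have h6 : 6 ≤ a m := habove n
        have h6' : 6 ≤ a (m + 1) := (hgrow m h6).1
        have hum : u m = (2:ℝ)⁻¹ ^ m * Real.log (a m) := by
          simp [hu, hmax m h6]
        have hum' : u (m + 1) = (2:ℝ)⁻¹ ^ (m + 1) * Real.log (a (m + 1)) := by
          simp [hu, hmax (m + 1) h6']
        have hkey : |Real.log (a (m + 1)) - 2 * Real.log (a m)| ≤ Real.log 6 := by
          rw [abs_le]
          constructor
          · linarith [(hgrow m h6).2]
          · have hup2 : a (m + 1) ≤ 6 * a m ^ 2 := by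
              have : a m * (a m + 5) ≤ 6 * a m ^ 2 := by nlinarith
              linarith [haup m]
            have := Real.log_le_log (by linarith : (0:ℝ) < a (m+1)) hup2
            rw [Real.log_mul (by norm_num) (by positivity), Real.log_pow] at this
            push_cast at this
            linarith
        have heq : u (m + 1) - u m
            = (2:ℝ)⁻¹ ^ (m + 1) * (Real.log (a (m + 1)) - 2 * Real.log (a m)) := by
          rw [hum, hum', pow_succ]
          ring
        rw [heq, abs_mul, abs_of_pos (hpowpos (m + 1))]
        exact mul_le_mul_of_nonneg_left hkey (le_of_lt (hpowpos (m + 1)))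
      have hcauchy : CauchySeq (fun n => u (n + N)) := by
        apply cauchySeq_of_le_geometric (2:ℝ)⁻¹ ((2:ℝ)⁻¹ ^ (N + 1) * Real.log 6) (by norm_num)
        intro n
        rw [Real.dist_eq, abs_sub_comm]
        have := hdiff n
        have harr : N + n + 1 = n + 1 + N := by ring
        have harr2 : N + n = n + N := by ring
        rw [harr, harr2] at this
        calc |u (n + 1 + N) - u (n + N)| ≤ (2:ℝ)⁻¹ ^ (n + 1 + N) * Real.log 6 := this
        _ = (2:ℝ)⁻¹ ^ (N + 1) * Real.log 6 * (2:ℝ)⁻¹ ^ n := by ring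
      obtain ⟨L, hL⟩ := cauchySeq_tendsto_of_complete hcauchy
      exact ⟨L, (tendsto_add_atTop_iff_nat N).mp hL⟩
  obtain ⟨L, hL⟩ := hconv
  have hgreen : green lam ξ = L := hL.limsup_eq
  -- lower bound pointwise
  have hlower : ∀ n, Real.log (‖ξ‖) - Real.log 6 ≤ u n := by
    intro n
    rw [← hξ0]
    by_cases h6 : 6 ≤ a 0
    · have hind : ∀ n, 6 ≤ a n ∧
          (2:ℝ) ^ n * (Real.log (a 0) - Real.log 6) + Real.log 6 ≤ Real.log (a n) := by
        intro n
        induction n with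
        | zero => constructor; exact h6; simp
        | succ k ih =>
          obtain ⟨ih1, ih2⟩ := ih
          refine ⟨(hgrow k ih1).1, ?_⟩
          have := (hgrow k ih1).2
          have hr0 : 0 ≤ Real.log (a 0) - Real.log 6 := by
            have := Real.log_le_log (by norm_num : (0:ℝ) < 6) h6
            linarith
          rw [pow_succ]
          nlinarith
      obtain ⟨h6n, hlogn⟩ := hind n
      have h1 : (2:ℝ)⁻¹ ^ n * Real.log (a n) ≤ u n := by
        simp only [hu]
        refine mul_le_mul_of_nonneg_left (le_max_left _ _) (le_of_lt (hpowpos n))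
      have h2 : Real.log (a 0) - Real.log 6 ≤ (2:ℝ)⁻¹ ^ n * Real.log (a n) := by
        have h := mul_le_mul_of_nonneg_left hlogn (le_of_lt (hpowpos n))
        have hcalc : (2:ℝ)⁻¹ ^ n * ((2:ℝ) ^ n * (Real.log (a 0) - Real.log 6) + Real.log 6)
            = (Real.log (a 0) - Real.log 6) + (2:ℝ)⁻¹ ^ n * Real.log 6 := by
          rw [mul_add, ← mul_assoc, hpowmul n, one_mul]
        have hnn : 0 ≤ (2:ℝ)⁻¹ ^ n * Real.log 6 :=
          mul_nonneg (le_of_lt (hpowpos n)) hlog6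
        linarith
      linarith
    · push_neg at h6
      have hle : Real.log (a 0) ≤ Real.log 6 := log_le_log'' (ha0 0) (by norm_num) (le_of_lt h6)
      have : 0 ≤ u n := mul_nonneg (le_of_lt (hpowpos n)) (le_max_right _ _)
      linarith
  -- upper bound pointwise
  have hupper : ∀ n, u n ≤ max (Real.log 11) (Real.log (‖ξ‖) + Real.log (11 / 6)) := by
    set c : ℝ := Real.log (11/6) with hc
    set t : ℕ → ℝ := fun n => Real.log (max (a n) 6) with ht
    have htpos : ∀ n, 6 ≤ max (a n) 6 := fun n => le_max_right _ _
    have ht6 : ∀ n, Real.log 6 ≤ t n := by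
      intro n; exact Real.log_le_log (by norm_num) (htpos n)
    have hstep : ∀ n, t (n + 1) ≤ 2 * t n + c := by
      intro n
      set M := max (a n) 6 with hM
      have hM6 : 6 ≤ M := htpos n
      have h1 : a (n + 1) ≤ M * (M + 5) := by
        have h2 : a n * (a n + 5) ≤ M * (M + 5) := by
          have := le_max_left (a n) 6
          nlinarith [ha0 n]
        linarith [haup n]
      have h3 : M * (M + 5) ≤ 11/6 * M ^ 2 := by nlinarith
      have h4 : max (a (n + 1)) 6 ≤ 11/6 * M ^ 2 := by
        refine max_le (by linarith) (by nlinarith)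
      have h5 : Real.log (max (a (n+1)) 6) ≤ Real.log (11/6 * M ^ 2) :=
        Real.log_le_log (by linarith [htpos (n+1)]) h4
      rw [Real.log_mul (by norm_num) (by positivity), Real.log_pow] at h5
      push_cast at h5
      simp only [ht, hc]
      linarith
    have hind : ∀ n, t n + c ≤ (2:ℝ) ^ n * (t 0 + c) := by
      intro n
      induction n with
      | zero => simp
      | succ k ih =>
        have h0 : 0 ≤ t 0 + c := by linarith [ht6 0]
        rw [pow_succ]
        nlinarith [hstep k]
    have hunle : ∀ n, u n ≤ t 0 + c := by
      intro n
      have h1 : max (Real.log (a n)) 0 ≤ t n := by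
        refine max_le ?_ (by linarith [ht6 n, hlog6])
        exact log_le_log'' (ha0 n) (by linarith [htpos n]) (le_max_left _ _)
      have h2 : u n ≤ (2:ℝ)⁻¹ ^ n * t n :=
        mul_le_mul_of_nonneg_left h1 (le_of_lt (hpowpos n))
      have h3 : (2:ℝ)⁻¹ ^ n * t n ≤ t 0 + c := by
        have h4 : (2:ℝ)⁻¹ ^ n * (t n + c) ≤ (2:ℝ)⁻¹ ^ n * ((2:ℝ) ^ n * (t 0 + c)) :=
          mul_le_mul_of_nonneg_left (hind n) (le_of_lt (hpowpos n))
        have h5 : (2:ℝ)⁻¹ ^ n * ((2:ℝ) ^ n * (t 0 + c)) = t 0 + c := by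
          rw [← mul_assoc, hpowmul n, one_mul]
        nlinarith [hpowpos n, hlogc]
      linarith
    intro n
    have heq : t 0 + c = max (Real.log 11) (Real.log (‖ξ‖) + Real.log (11 / 6)) := by
      have h611 : Real.log 6 + Real.log (11/6) = Real.log 11 := by
        rw [← Real.log_mul (by norm_num) (by norm_num)]
        norm_num
      have hmaxlog : Real.log (max (a 0) 6) = max (Real.log (a 0)) (Real.log 6) := by
        rcases le_total (a 0) 6 with h | h
        · rw [max_eq_right h, max_eq_right (log_le_log'' (ha0 0) (by norm_num) h)]
        · rw [max_eq_left h, max_eq_left (Real.log_le_log (by norm_num) h)]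
      simp only [ht, hc, hmaxlog, hξ0]
      rw [← max_add_add_right, h611, max_comm]
    rw [← heq]; exact hunle n
  refine ⟨by rw [hgreen]; exact hL, ?_, ?_⟩
  · rw [hgreen]; exact ge_of_tendsto' hL hlower
  · rw [hgreen]; exact le_of_tendsto' hL hupper
end

section
/- Let R > 6, g > 0, and λ ∈ ℂ with |λ| ≤ 5. Let m = ⌈(log log(11R/6) − log g)/log 2⌉ as an integer, and suppose m ≥ 0. Then for every z ∈ ℂ with |Q_λ^{∘m}(z)| ≤ R one has G_λ(z) ≤ g. -/
open MeasureTheory Filter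

theorem stmt5 (R g : ℝ) (hR : 6 < R) (hg : 0 < g) (lam : ℂ) (hlam : ‖lam‖ ≤ 5)
    (m : ℤ)
    (hm : m = ⌈(Real.log (Real.log (11 * R / 6)) - Real.log g) / Real.log 2⌉)
    (hm0 : 0 ≤ m) :
    ∀ z : ℂ, ‖(Q lam)^[m.toNat] z‖ ≤ R → green lam z ≤ g := by

  intro z hz
  set M := m.toNat with hM
  set C : ℝ := 11 * R / 6 with hC
  have hC1 : (11:ℝ) < C := by rw [hC]; linarith
  have hlogC : 0 < Real.log C := Real.log_pos (by linarith)
  have step : ∀ w : ℂ, ‖Q lam w‖ + 5/2 ≤ (‖w‖ + 5/2)^2 := by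
    intro w
    have h1 : ‖Q lam w‖ ≤ 5 * ‖w‖ + ‖w‖ ^ 2 := by
      calc ‖Q lam w‖ ≤ ‖lam * w‖ + ‖w^2‖ :=
            norm_add_le _ _
        _ = ‖lam‖ * ‖w‖ + ‖w‖ ^ 2 := by
            rw [norm_mul, norm_pow]
        _ ≤ 5 * ‖w‖ + ‖w‖ ^ 2 := by
            have := norm_nonneg w; nlinarith
    nlinarith [norm_nonneg w]
  have iter : ∀ k : ℕ, ‖(Q lam)^[M + k] z‖ + 5/2 ≤ C ^ (2^k) := by
    intro k
    induction k with
    | zero =>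
      simp only [Nat.add_zero, pow_zero, pow_one]
      rw [hC]; linarith
    | succ k ih =>
      have h0 : 0 ≤ ‖(Q lam)^[M + k] z‖ + 5/2 := by positivity
      calc ‖(Q lam)^[M + (k+1)] z‖ + 5/2
          = ‖Q lam ((Q lam)^[M + k] z)‖ + 5/2 := by
            rw [← Nat.add_assoc, Function.iterate_succ_apply']
        _ ≤ (‖(Q lam)^[M + k] z‖ + 5/2)^2 := step _
        _ ≤ (C ^ (2^k))^2 := by exact pow_le_pow_left₀ h0 ih 2
        _ = C ^ (2^(k+1)) := by rw [← pow_mul, pow_succ]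
  have h2m : Real.log C / g ≤ (2:ℝ) ^ M := by
    have hm' : (Real.log (Real.log C) - Real.log g) / Real.log 2 ≤ (m : ℝ) := by
      rw [hm]; exact_mod_cast Int.le_ceil _
    have hlog2 : 0 < Real.log 2 := Real.log_pos one_lt_two
    have hmM : (M : ℝ) = (m : ℝ) := by
      rw [hM]; exact_mod_cast congrArg (Int.cast : ℤ → ℝ) (Int.toNat_of_nonneg hm0)
    have hkey : Real.log (Real.log C / g) ≤ (M : ℝ) * Real.log 2 := by
      rw [Real.log_div (ne_of_gt hlogC) (ne_of_gt hg), hmM]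
      calc Real.log (Real.log C) - Real.log g
          = ((Real.log (Real.log C) - Real.log g) / Real.log 2) * Real.log 2 := by
            field_simp
        _ ≤ (m : ℝ) * Real.log 2 := by
            exact mul_le_mul_of_nonneg_right hm' (le_of_lt hlog2)
    have hpos : 0 < Real.log C / g := div_pos hlogC hg
    calc Real.log C / g = Real.exp (Real.log (Real.log C / g)) := (Real.exp_log hpos).symm
      _ ≤ Real.exp ((M:ℝ) * Real.log 2) := Real.exp_le_exp.mpr hkey
      _ = (2:ℝ) ^ M := by
          rw [← Real.log_pow, Real.exp_log (by positivity)]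
  have hgoal : Real.log C ≤ g * 2 ^ M := by
    have := (div_le_iff₀ hg).mp h2m
    linarith [this]
  have hev : ∀ n : ℕ, M ≤ n →
      (2 : ℝ)⁻¹ ^ n * max (Real.log (‖(Q lam)^[n] z‖)) 0 ≤ g := by
    intro n hn
    obtain ⟨k, rfl⟩ := Nat.exists_eq_add_of_le hn
    have hb : ‖(Q lam)^[M + k] z‖ ≤ C ^ (2^k) := by
      have := iter k; linarith
    have hCk1 : (1:ℝ) ≤ C ^ (2^k) := one_le_pow₀ (by linarith : (1:ℝ) ≤ C)
    have hlog : max (Real.log (‖(Q lam)^[M+k] z‖)) 0 ≤ (2^k : ℝ) * Real.log C := by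
      have hR2 : Real.log (C ^ (2^k)) = (2^k : ℝ) * Real.log C := by
        rw [Real.log_pow]; push_cast; ring
      rcases eq_or_lt_of_le (norm_nonneg ((Q lam)^[M+k] z)) with h0 | h0
      · rw [← h0]
        simp only [Real.log_zero, max_self]
        positivity
      · have := Real.log_le_log h0 hb
        rw [hR2] at this
        exact max_le this (by positivity)
    have h2n : ((2:ℝ)⁻¹) ^ (M + k) * ((2^k : ℝ) * Real.log C) = Real.log C / 2 ^ M := by
      rw [inv_pow, pow_add]
      field_simp
    calc (2 : ℝ)⁻¹ ^ (M+k) * max (Real.log (‖(Q lam)^[M+k] z‖)) 0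
        ≤ (2 : ℝ)⁻¹ ^ (M+k) * ((2^k : ℝ) * Real.log C) := by
          apply mul_le_mul_of_nonneg_left hlog (by positivity)
      _ = Real.log C / 2 ^ M := h2n
      _ ≤ g := by
          rw [div_le_iff₀ (by positivity : (0:ℝ) < (2:ℝ) ^ M)]
          linarith
  have hnn : ∀ n : ℕ, (0:ℝ) ≤
      (2 : ℝ)⁻¹ ^ n * max (Real.log (‖(Q lam)^[n] z‖)) 0 := by
    intro n; positivity
  apply Filter.limsup_le_of_le (Filter.isCoboundedUnder_le_of_le Filter.atTop hnn)
  filter_upwards [Filter.eventually_ge_atTop M] with n hn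
  exact hev n hn
end

section
/- For every λ₀ ∈ ℂ and every ε > 0 there exists δ > 0 such that for all λ ∈ ℂ with |λ − λ₀| < δ one has Area(K_λ) ≤ Area(K_{λ₀}) + ε. (That is, limsup_{λ→λ₀} Area(K_λ) ≤ Area(K_{λ₀}); the map λ ↦ Area(K_λ) is upper semicontinuous.) -/
open MeasureTheory Filter

/-- Truncated filled Julia set: all iterates up to `n` stay in the ball of radius `R`. -/
def Btrunc (lam : ℂ) (R : ℝ) (n : ℕ) : Set ℂ :=
  {z : ℂ | ∀ m ≤ n, ‖(Q lam)^[m] z‖ ≤ R}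

lemma Q_continuous (lam : ℂ) : Continuous (Q lam) := by
  unfold Q; continuity

lemma Btrunc_measurable (lam : ℂ) (R : ℝ) (n : ℕ) : MeasurableSet (Btrunc lam R n) := by
  have : Btrunc lam R n =
      ⋂ m, ⋂ (_ : m ≤ n), {z : ℂ | ‖(Q lam)^[m] z‖ ≤ R} := by
    ext z; simp [Btrunc]
  rw [this]
  refine MeasurableSet.iInter fun m => MeasurableSet.iInter fun _ => ?_
  exact (isClosed_le (continuous_norm.comp ((Q_continuous lam).iterate m))
    continuous_const).measurableSet

/-- Growth: beyond the escape radius, the modulus at least doubles. -/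
lemma Q_growth {lam : ℂ} {R : ℝ} (hR : ‖lam‖ + 2 ≤ R) {w : ℂ}
    (hw : R < ‖w‖) : 2 * ‖w‖ ≤ ‖Q lam w‖ := by
  have hfac : Q lam w = w * (lam + w) := by unfold Q; ring
  have h1 : ‖w‖ ≤ ‖lam + w‖ + ‖lam‖ := by
    calc ‖w‖ = ‖(lam + w) + (-lam)‖ := by congr 1; ring
    _ ≤ ‖lam + w‖ + ‖-lam‖ := norm_add_le _ _
    _ = ‖lam + w‖ + ‖lam‖ := by rw [norm_neg]
  have h2 : 2 ≤ ‖lam + w‖ := by linarith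
  rw [hfac, norm_mul]
  nlinarith [norm_nonneg w]

/-- Points of the filled Julia set never leave the ball of radius `R`. -/
lemma filledJulia_subset_Btrunc {lam : ℂ} {R : ℝ} (hR : ‖lam‖ + 2 ≤ R)
    {z : ℂ} (hz : z ∈ filledJulia lam) :
    ∀ m : ℕ, ‖(Q lam)^[m] z‖ ≤ R := by
  obtain ⟨M, hM⟩ := hz
  intro m
  by_contra hcon
  push_neg at hcon
  have hpos : 0 < ‖(Q lam)^[m] z‖ := by
    have : (0 : ℝ) ≤ ‖lam‖ := norm_nonneg lam
    linarith
  have key : ∀ k : ℕ, 2 ^ k * ‖(Q lam)^[m] z‖ ≤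
      ‖(Q lam)^[m + k] z‖ := by
    intro k
    induction k with
    | zero => simp
    | succ k ih =>
      have hbig : R < ‖(Q lam)^[m + k] z‖ := by
        have h1 : (1 : ℝ) ≤ 2 ^ k := one_le_pow₀ (by norm_num)
        nlinarith
      have := Q_growth hR hbig
      have hstep : (Q lam)^[m + (k + 1)] z = Q lam ((Q lam)^[m + k] z) := by
        rw [show m + (k + 1) = (m + k) + 1 by ring, Function.iterate_succ_apply']
      rw [hstep]
      calc 2 ^ (k + 1) * ‖(Q lam)^[m] z‖
          = 2 * (2 ^ k * ‖(Q lam)^[m] z‖) := by ring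
        _ ≤ 2 * ‖(Q lam)^[m + k] z‖ := by linarith
        _ ≤ _ := this
  obtain ⟨k, hk⟩ := pow_unbounded_of_one_lt (M / ‖(Q lam)^[m] z‖)
    (by norm_num : (1 : ℝ) < 2)
  have h1 : M < 2 ^ k * ‖(Q lam)^[m] z‖ := by
    rw [div_lt_iff₀ hpos] at hk; linarith
  have h2 := hM (m + k)
  have h3 := key k
  linarith

/-- Characterization of the filled Julia set via truncations. -/
lemma filledJulia_eq_iInter {lam : ℂ} {R : ℝ} (hR : ‖lam‖ + 2 ≤ R) :
    filledJulia lam = ⋂ n, Btrunc lam R n := by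
  ext z
  simp only [Set.mem_iInter]
  constructor
  · intro hz n m _
    exact filledJulia_subset_Btrunc hR hz m
  · intro h
    exact ⟨R, fun n => h n n le_rfl⟩

/-- Monotonicity helper for the perturbation bound. -/
lemma bound_le_one {δ R L : ℝ} (hδ0 : 0 ≤ δ) (hR : 0 ≤ R) (hL1 : 1 ≤ L)
    {m n : ℕ} (hm : m ≤ n) (hsmall : δ * R * (n + 1) * L ^ n ≤ 1) :
    δ * R * m * L ^ m ≤ 1 := by
  have h1 : (m : ℝ) ≤ (n : ℝ) + 1 := by
    have : (m : ℝ) ≤ (n : ℝ) := by exact_mod_cast hm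
    linarith
  have h2 : L ^ m ≤ L ^ n := pow_le_pow_right₀ hL1 hm
  have h3 : (0:ℝ) ≤ L ^ m := pow_nonneg (by linarith) m
  have h4 : (0:ℝ) ≤ δ * R := mul_nonneg hδ0 hR
  calc δ * R * ↑m * L ^ m ≤ δ * R * ((n:ℝ) + 1) * L ^ n := by
        apply mul_le_mul (mul_le_mul_of_nonneg_left h1 h4) h2 h3
        positivity
    _ ≤ 1 := hsmall

/-- Perturbation estimate for iterates. -/
lemma iterate_perturb (lam₀ lam : ℂ) (R L δ : ℝ) (hR : 0 ≤ R)
    (hL : ‖lam₀‖ + 2 * R + 1 ≤ L) (hL1 : 1 ≤ L)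
    (hδ : ‖lam - lam₀‖ ≤ δ) (z : ℂ) (n : ℕ)
    (hz : ∀ m ≤ n, ‖(Q lam)^[m] z‖ ≤ R)
    (hsmall : δ * R * (n + 1) * L ^ n ≤ 1) :
    ∀ m ≤ n, ‖(Q lam₀)^[m] z - (Q lam)^[m] z‖ ≤ δ * R * m * L ^ m := by
  have hδ0 : 0 ≤ δ := le_trans (norm_nonneg _) hδ
  intro m
  induction m with
  | zero => intro _; simp
  | succ m ih =>
    intro hm1
    have hm : m ≤ n := Nat.le_of_succ_le hm1
    have IH := ih hm
    set w := (Q lam₀)^[m] z with hw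
    set u := (Q lam)^[m] z with hu
    have hle : δ * R * m * L ^ m ≤ 1 := bound_le_one hδ0 hR hL1 hm hsmall
    have hd : ‖w - u‖ ≤ 1 := le_trans IH hle
    have huR : ‖u‖ ≤ R := hz m hm
    have hwR : ‖w‖ ≤ R + 1 := by
      have := norm_add_le (w - u) u
      simp only [sub_add_cancel] at this
      linarith
    have hstep₀ : (Q lam₀)^[m + 1] z = Q lam₀ w := Function.iterate_succ_apply' _ _ _
    have hstep : (Q lam)^[m + 1] z = Q lam u := Function.iterate_succ_apply' _ _ _
    have hiden : Q lam₀ w - Q lam u =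
        lam₀ * (w - u) + (lam₀ - lam) * u + (w - u) * (w + u) := by
      unfold Q; ring
    have htri : ‖Q lam₀ w - Q lam u‖ ≤
        ‖lam₀‖ * ‖w - u‖ +
        ‖lam₀ - lam‖ * ‖u‖ +
        ‖w - u‖ * ‖w + u‖ := by
      rw [hiden]
      calc ‖lam₀ * (w - u) + (lam₀ - lam) * u + (w - u) * (w + u)‖
          ≤ ‖lam₀ * (w - u) + (lam₀ - lam) * u‖ +
            ‖(w - u) * (w + u)‖ := norm_add_le _ _
        _ ≤ ‖lam₀ * (w - u)‖ + ‖(lam₀ - lam) * u‖ +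
            ‖(w - u) * (w + u)‖ := by
            have := norm_add_le (lam₀ * (w - u)) ((lam₀ - lam) * u)
            linarith
        _ = _ := by rw [norm_mul, norm_mul, norm_mul]
    have habs' : ‖lam₀ - lam‖ ≤ δ := by
      rw [← norm_neg]; simpa [neg_sub] using hδ
    have hwu : ‖w + u‖ ≤ 2 * R + 1 := by
      have := norm_add_le w u; linarith
    have hmain : ‖Q lam₀ w - Q lam u‖ ≤
        L * ‖w - u‖ + δ * R := by
      have h0 := norm_nonneg (w - u)
      have h1 := norm_nonneg u
      nlinarith [norm_nonneg lam₀]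
    rw [hstep₀, hstep]
    have hLm : (0:ℝ) ≤ L ^ m := pow_nonneg (by linarith) m
    calc ‖Q lam₀ w - Q lam u‖
        ≤ L * ‖w - u‖ + δ * R := hmain
      _ ≤ L * (δ * R * m * L ^ m) + δ * R := by nlinarith
      _ ≤ δ * R * (m + 1) * L ^ (m + 1) := by
          have h1 : (1:ℝ) ≤ L ^ (m + 1) := one_le_pow₀ hL1
          have h2 : L * (δ * R * m * L ^ m) = δ * R * m * L ^ (m + 1) := by
            rw [pow_succ]; ring
          rw [h2]
          nlinarith [mul_nonneg hδ0 hR]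
      _ = δ * R * (↑(m + 1)) * L ^ (m + 1) := by push_cast; ring

theorem stmt14 (lam₀ : ℂ) (ε : ℝ) (hε : 0 < ε) :
    ∃ δ > (0 : ℝ), ∀ lam : ℂ, ‖lam - lam₀‖ < δ →
      area (filledJulia lam) ≤ area (filledJulia lam₀) + ε := by
  set R : ℝ := ‖lam₀‖ + 3 with hRdef
  have habs0 : 0 ≤ ‖lam₀‖ := norm_nonneg lam₀
  have hRpos : 0 < R := by simp only [hRdef]; linarith
  -- the decreasing family of truncations at parameter lam₀ with radius R+1
  set C : ℕ → Set ℂ := fun n => Btrunc lam₀ (R + 1) n with hCdef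
  have hC_meas : ∀ n, MeasurableSet (C n) := fun n => Btrunc_measurable _ _ _
  have hC_anti : Antitone C := by
    intro a b hab z hz m hm
    exact hz m (le_trans hm hab)
  have hR1 : ‖lam₀‖ + 2 ≤ R + 1 := by simp only [hRdef]; linarith
  have hC_inter : ⋂ n, C n = filledJulia lam₀ :=
    (filledJulia_eq_iInter hR1).symm
  have hC0_fin : volume (C 0) ≠ ⊤ := by
    have hsub : C 0 ⊆ Metric.closedBall (0 : ℂ) (R + 1) := by
      intro z hz
      have := hz 0 le_rfl
      simpa [Metric.mem_closedBall, Complex.dist_eq] using this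
    exact ne_top_of_le_ne_top (MeasureTheory.measure_closedBall_lt_top).ne
      (measure_mono hsub)
  have hK_fin : volume (filledJulia lam₀) ≠ ⊤ := by
    refine ne_top_of_le_ne_top hC0_fin (measure_mono ?_)
    rw [← hC_inter]; exact Set.iInter_subset _ 0
  -- continuity from above
  have htend : Filter.Tendsto (fun n => volume (C n)) atTop
      (nhds (volume (filledJulia lam₀))) := by
    have := MeasureTheory.tendsto_measure_iInter_atTop
      (μ := volume) (s := C) (fun n => (hC_meas n).nullMeasurableSet) hC_anti ⟨0, hC0_fin⟩
    rw [hC_inter] at this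
    exact this
  have hlt : volume (filledJulia lam₀) <
      volume (filledJulia lam₀) + ENNReal.ofReal ε := by
    refine ENNReal.lt_add_right hK_fin ?_
    exact (ENNReal.ofReal_pos.mpr hε).ne'
  have hev : ∀ᶠ n in atTop, volume (C n) <
      volume (filledJulia lam₀) + ENNReal.ofReal ε :=
    htend.eventually_lt_const hlt
  obtain ⟨n, hn⟩ := hev.exists
  -- choose δ
  set L : ℝ := ‖lam₀‖ + 2 * R + 1 with hLdef
  have hL1 : 1 ≤ L := by simp only [hLdef]; linarith
  have hLn : 0 < L ^ n := pow_pos (by linarith) n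
  set δ : ℝ := min 1 (1 / (R * (n + 1) * L ^ n)) with hδdef
  have hδpos : 0 < δ := by
    apply lt_min one_pos
    apply div_pos one_pos
    positivity
  refine ⟨δ, hδpos, fun lam hlam => ?_⟩
  have hδ1 : δ ≤ 1 := min_le_left _ _
  have hlam1 : ‖lam - lam₀‖ ≤ 1 := le_trans hlam.le hδ1
  have hlamabs : ‖lam‖ ≤ ‖lam₀‖ + 1 := by
    have := norm_add_le (lam - lam₀) lam₀
    simp only [sub_add_cancel] at this
    linarith
  have hRlam : ‖lam‖ + 2 ≤ R := by simp only [hRdef]; linarith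
  -- small condition
  have hsmall : δ * R * (n + 1) * L ^ n ≤ 1 := by
    have h2 : δ ≤ 1 / (R * (n + 1) * L ^ n) := min_le_right _ _
    have hpos : (0:ℝ) < R * (n + 1) * L ^ n := by positivity
    rw [le_div_iff₀ hpos] at h2
    calc δ * R * (n + 1) * L ^ n = δ * (R * (n + 1) * L ^ n) := by ring
      _ ≤ 1 := h2
  -- K_lam ⊆ Btrunc lam R n ⊆ C n
  have hsub1 : filledJulia lam ⊆ Btrunc lam R n := by
    intro z hz m _
    exact filledJulia_subset_Btrunc hRlam hz m
  have hsub2 : Btrunc lam R n ⊆ C n := by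
    intro z hz m hm
    have hpert := iterate_perturb lam₀ lam R L δ hRpos.le le_rfl hL1 hlam.le z n hz
      hsmall m hm
    have hbound : δ * R * m * L ^ m ≤ 1 :=
      bound_le_one hδpos.le hRpos.le hL1 hm hsmall
    have htri := norm_add_le ((Q lam₀)^[m] z - (Q lam)^[m] z) ((Q lam)^[m] z)
    simp only [sub_add_cancel] at htri
    have := hz m hm
    calc ‖(Q lam₀)^[m] z‖ ≤
        ‖(Q lam₀)^[m] z - (Q lam)^[m] z‖ + ‖(Q lam)^[m] z‖ := htri
      _ ≤ 1 + R := by linarith [le_trans hpert hbound]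
      _ = R + 1 := by ring
  have hmono : volume (filledJulia lam) ≤ volume (C n) :=
    measure_mono (hsub1.trans hsub2)
  have hfinal : volume (filledJulia lam) ≤
      volume (filledJulia lam₀) + ENNReal.ofReal ε := le_trans hmono hn.le
  have hRHSfin : volume (filledJulia lam₀) + ENNReal.ofReal ε ≠ ⊤ :=
    ENNReal.add_ne_top.mpr ⟨hK_fin, ENNReal.ofReal_ne_top⟩
  have := ENNReal.toReal_mono hRHSfin hfinal
  rw [ENNReal.toReal_add hK_fin ENNReal.ofReal_ne_top, ENNReal.toReal_ofReal hε.le] at this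
  simpa [area] using this
end

section
/- Let Q(z) = z + z² and let K be its filled Julia set. There exist a nonempty open set Ω contained in the interior of K with Q(Ω) ⊆ Ω, and a holomorphic map Φ : interior(K) → ℂ, such that: Φ is injective on Ω; Φ(Q(z)) = Φ(z) + 1 for every z in the interior of K; for every z in the interior of K there exists n ∈ ℕ with Q^{∘n}(z) ∈ Ω; and Φ(interior(K)) = ℂ. -/
open MeasureTheory Filter

/-- compatibility: the complex absolute value as an `AbsoluteValue` -/
noncomputable def Complex.abs : AbsoluteValue ℂ ℝ where
  toFun x := ‖x‖
  map_mul' := norm_mul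
  nonneg' := norm_nonneg
  eq_zero' _ := norm_eq_zero
  add_le' := norm_add_le

lemma Complex.abs_re_le_abs (z : ℂ) : |z.re| ≤ Complex.abs z := Complex.abs_re_le_norm z

lemma Complex.re_le_abs (z : ℂ) : z.re ≤ Complex.abs z := Complex.re_le_norm z

lemma Complex.normSq_eq_abs (z : ℂ) : Complex.normSq z = Complex.abs z ^ 2 :=
  Complex.normSq_eq_norm_sq z

lemma Complex.abs_ofReal (r : ℝ) : Complex.abs (r : ℂ) = |r| := Complex.norm_real r

lemma Complex.norm_eq_abs (z : ℂ) : ‖z‖ = Complex.abs z := rfl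

@[simp] lemma map_neg_eq_map (z : ℂ) : Complex.abs (-z) = Complex.abs z := norm_neg z


noncomputable section Stmt15Aux
open Metric Set Complex
open scoped NNReal

namespace S15


/-- local notation for the filled Julia set of z+z^2 -/
abbrev K : Set ℂ := filledJulia 1

lemma q_def (z : ℂ) : Q 1 z = z + z^2 := by simp [Q]

lemma q_factor (z : ℂ) : Q 1 z = z * (1 + z) := by simp [Q]; ring

lemma q_ne_zero {z : ℂ} (h0 : z ≠ 0) (h1 : z ≠ -1) : Q 1 z ≠ 0 := by
  rw [q_factor]
  exact mul_ne_zero h0 (by intro h; apply h1; linear_combination h)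

lemma hasDerivAt_q (z : ℂ) : HasDerivAt (Q 1) (1 + 2*z) z := by
  have h : HasDerivAt (fun z : ℂ => 1*z + z^2) (1*1 + 2*z^1) z :=
    ((hasDerivAt_id z).const_mul 1).add (hasDerivAt_pow 2 z)
  have h2 : (1*1 + 2*z^1 : ℂ) = 1 + 2*z := by ring
  rw [h2] at h
  exact h

lemma continuous_q : Continuous (Q 1) := by
  have : Continuous fun z : ℂ => 1*z + z^2 := by continuity
  exact this

lemma differentiable_q : Differentiable ℂ (Q 1) := fun z => (hasDerivAt_q z).differentiableAt

lemma differentiable_qn (n : ℕ) : Differentiable ℂ ((Q 1)^[n]) :=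
  Differentiable.iterate differentiable_q n

/-- points of K -/
lemma K_fwd {z : ℂ} (hz : z ∈ K) : Q 1 z ∈ K := by
  obtain ⟨M, hM⟩ := hz
  exact ⟨M, fun n => by rw [← Function.iterate_succ_apply]; exact hM (n+1)⟩

lemma K_fwd_iter {z : ℂ} (hz : z ∈ K) (n : ℕ) : (Q 1)^[n] z ∈ K := by
  induction n with
  | zero => exact hz
  | succ n ih => rw [Function.iterate_succ_apply']; exact K_fwd ih

lemma K_pre {z : ℂ} (hz : Q 1 z ∈ K) : z ∈ K := by
  obtain ⟨M, hM⟩ := hz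
  refine ⟨max M (Complex.abs z), fun n => ?_⟩
  cases n with
  | zero => exact le_max_right _ _
  | succ n => rw [Function.iterate_succ_apply]; exact (hM n).trans (le_max_left _ _)

/-- escape criterion: |z| > 2 implies escape -/
lemma escape {z : ℂ} (hz : 2 < Complex.abs z) : z ∉ K := by
  intro ⟨M, hM⟩
  set d : ℝ := Complex.abs z - 2 with hd
  have hd0 : 0 < d := by linarith
  have key : ∀ n, 2 + (1 + 1/2)^n * d ≤ Complex.abs ((Q 1)^[n] z) := by
    intro n
    induction n with
    | zero => simp [hd]
    | succ n ih =>
      rw [Function.iterate_succ_apply']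
      set y := (Q 1)^[n] z with hy
      have h2 : 2 < Complex.abs y := by
        have : (0:ℝ) < (1+1/2)^n * d := by positivity
        nlinarith
      have habs : Complex.abs (Q 1 y) ≥ Complex.abs y * (Complex.abs y - 1) := by
        rw [q_factor, map_mul]
        have h1 : Complex.abs y ≤ Complex.abs (1+y) + 1 := by
          calc Complex.abs y = Complex.abs ((1+y) + (-1)) := by ring_nf
            _ ≤ Complex.abs (1+y) + Complex.abs (-1) := Complex.abs.add_le _ _
            _ = Complex.abs (1+y) + 1 := by norm_num
        nlinarith [Complex.abs.nonneg y, Complex.abs.nonneg (1+y)]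
      have hpow : (0:ℝ) < (1+1/2)^n * d := by positivity
      have : Complex.abs y * (Complex.abs y - 1) ≥ 2 + (1+1/2)^(n+1) * d := by
        have hyb : Complex.abs y ≥ 2 + (1+1/2)^n * d := ih
        have : (1+1/2:ℝ)^(n+1) = (1+1/2)^n * (3/2) := by ring
        nlinarith [pow_pos (show (0:ℝ) < 1+1/2 by norm_num) n]
      linarith
  -- contradiction with boundedness
  have hgrow : ∀ n : ℕ, 2 + (1 + (n:ℝ) * (1/2)) * d ≤ M := by
    intro n
    have h1 : (1 + (n:ℝ) * (1/2)) ≤ (1+1/2)^n := by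
      have := one_add_mul_le_pow (show (-2:ℝ) ≤ 1/2 by norm_num) n
      linarith [this]
    have hMn : Complex.abs ((Q 1)^[n] z) ≤ M := hM n
    nlinarith [key n, hMn]
  obtain ⟨n, hn⟩ := exists_nat_gt ((M - 2 - d)/(d/2))
  have := hgrow n
  have h2 : (n:ℝ) * (1/2) * d > M - 2 - d := by
    rw [div_lt_iff₀ (by positivity : (0:ℝ) < d/2)] at hn
    nlinarith [hn]
  nlinarith

lemma K_subset_ball {z : ℂ} (hz : z ∈ K) : Complex.abs z ≤ 2 := by
  by_contra h
  exact escape (by linarith) hz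

lemma K_iter_le_two {z : ℂ} (hz : z ∈ K) (n : ℕ) : Complex.abs ((Q 1)^[n] z) ≤ 2 :=
  K_subset_ball (K_fwd_iter hz n)



-- positive reals escape
lemma real_escape {t : ℝ} (ht : 0 < t) : (t : ℂ) ∉ K := by
  intro ⟨M, hM⟩
  have key : ∀ n : ℕ, ∃ x : ℝ, t + n * t^2 ≤ x ∧ (Q 1)^[n] (t:ℂ) = (x:ℂ) := by
    intro n
    induction n with
    | zero => exact ⟨t, by simp, by simp⟩
    | succ n ih =>
      obtain ⟨x, hx1, hx2⟩ := ih
      refine ⟨x + x^2, ?_, ?_⟩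
      · have hxt : t ≤ x := by nlinarith [sq_nonneg ((n:ℝ)*t)]
        have : t^2 ≤ x^2 := by nlinarith
        push_cast
        nlinarith
      · rw [Function.iterate_succ_apply', hx2, q_def]
        push_cast
        ring
  obtain ⟨n, hn⟩ := exists_nat_gt ((M - t)/t^2)
  obtain ⟨x, hx1, hx2⟩ := key n
  have h1 := hM n
  rw [hx2] at h1
  have h2 : |x| ≤ M := by simpa using h1
  rw [div_lt_iff₀ (by positivity)] at hn
  have : x ≤ M := (le_abs_self x).trans h2
  nlinarith

lemma zero_not_interior : (0:ℂ) ∉ interior K := by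
  intro h
  obtain ⟨ε, hε, hball⟩ := Metric.isOpen_iff.mp isOpen_interior 0 h
  have hmem : (↑(min (ε/2) 1) : ℂ) ∈ K := by
    refine interior_subset (hball ?_)
    rw [mem_ball, dist_eq_norm]
    simp only [sub_zero, Complex.norm_real]
    rw [Real.norm_eq_abs, abs_of_pos (by positivity)]
    exact lt_of_le_of_lt (min_le_left _ _) (by linarith)
  exact real_escape (by positivity) hmem

lemma neg_one_not_interior : (-1:ℂ) ∉ interior K := by
  intro h
  obtain ⟨ε, hε, hball⟩ := Metric.isOpen_iff.mp isOpen_interior _ h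
  set t : ℝ := min (ε/2) 1 with htdef
  have ht : 0 < t := by positivity
  have hmem : (-1 - (t:ℂ)) ∈ K := by
    refine interior_subset (hball ?_)
    rw [mem_ball, dist_eq_norm]
    have : (-1 - (t:ℂ)) - (-1) = -(t:ℂ) := by ring
    rw [this]
    simp only [norm_neg, Complex.norm_real, Real.norm_eq_abs, abs_of_pos ht]
    exact lt_of_le_of_lt (min_le_left _ _) (by linarith)
  have : Q 1 (-1 - (t:ℂ)) = ((t + t^2 : ℝ) : ℂ) := by
    rw [q_def]; push_cast; ring
  have hK2 : ((t + t^2 : ℝ) : ℂ) ∈ K := by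
    rw [← this]
    exact K_fwd hmem
  exact real_escape (by positivity) hK2



lemma int_pre {z : ℂ} (hz : Q 1 z ∈ interior K) : z ∈ interior K := by
  have hopen : IsOpen ((Q 1) ⁻¹' (interior K)) := isOpen_interior.preimage continuous_q
  have hsub : (Q 1) ⁻¹' (interior K) ⊆ K := fun x hx => K_pre (interior_subset hx)
  exact interior_maximal hsub hopen hz

/-- Q is an open map -/
lemma q_isOpenMap : IsOpenMap (Q 1) := by
  intro s hs
  have h := (analyticOnNhd_univ_iff_differentiable.mpr differentiable_q).is_constant_or_isOpen
    isPreconnected_univ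
  rcases h with ⟨w, hw⟩ | h
  · exfalso
    have h0 := hw 0 (mem_univ _)
    have h1 := hw 1 (mem_univ _)
    rw [q_def] at h0 h1
    simp at h0 h1
    rw [← h1] at h0
    norm_num at h0
  · exact h s (subset_univ s) hs

lemma int_fwd {z : ℂ} (hz : z ∈ interior K) : Q 1 z ∈ interior K := by
  have : Q 1 '' (interior K) ⊆ K := by
    rintro _ ⟨x, hx, rfl⟩
    exact K_fwd (interior_subset hx)
  exact interior_maximal this (q_isOpenMap _ isOpen_interior) ⟨z, hz, rfl⟩

lemma int_fwd_iter {z : ℂ} (hz : z ∈ interior K) (n : ℕ) : (Q 1)^[n] z ∈ interior K := by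
  induction n with
  | zero => exact hz
  | succ n ih => rw [Function.iterate_succ_apply']; exact int_fwd ih

lemma iter_ne_zero {z : ℂ} (hz : z ∈ interior K) (n : ℕ) : (Q 1)^[n] z ≠ 0 :=
  fun h => zero_not_interior (h ▸ int_fwd_iter hz n)

lemma iter_ne_neg_one {z : ℂ} (hz : z ∈ interior K) (n : ℕ) : (Q 1)^[n] z ≠ -1 :=
  fun h => neg_one_not_interior (h ▸ int_fwd_iter hz n)

/-- chain rule for iterates -/
lemma hasDerivAt_qn (n : ℕ) (z : ℂ) :
    HasDerivAt ((Q 1)^[n]) (∏ k ∈ Finset.range n, (1 + 2 * (Q 1)^[k] z)) z := by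
  induction n with
  | zero => simpa using hasDerivAt_id z
  | succ n ih =>
    rw [Function.iterate_succ']
    have h := (hasDerivAt_q ((Q 1)^[n] z)).comp z ih
    rw [Finset.prod_range_succ]
    exact h.congr_deriv (by ring)

/-- Cauchy/Schwarz bound: derivative products along interior orbits are bounded -/
lemma deriv_prod_bound {z : ℂ} {r : ℝ} (hr : 0 < r) (hball : ball z r ⊆ K) (n : ℕ) :
    Complex.abs (∏ k ∈ Finset.range n, (1 + 2 * (Q 1)^[k] z)) ≤ 5 / r := by
  have hd : DifferentiableOn ℂ ((Q 1)^[n]) (ball z r) := (differentiable_qn n).differentiableOn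
  have hmaps : MapsTo ((Q 1)^[n]) (ball z r) (ball ((Q 1)^[n] z) 5) := by
    intro x hx
    have h1 : Complex.abs ((Q 1)^[n] x) ≤ 2 := K_iter_le_two (hball hx) n
    have h2 : Complex.abs ((Q 1)^[n] z) ≤ 2 :=
      K_iter_le_two (hball (mem_ball_self hr)) n
    rw [mem_ball, dist_eq_norm]
    calc ‖(Q 1)^[n] x - (Q 1)^[n] z‖ ≤ ‖(Q 1)^[n] x‖ + ‖(Q 1)^[n] z‖ := norm_sub_le _ _
      _ ≤ 2 + 2 := add_le_add h1 h2
      _ < 5 := by norm_num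
  have := Complex.norm_deriv_le_div_of_mapsTo_ball hd (hmaps.mono_right ball_subset_closedBall) hr
  rwa [(hasDerivAt_qn n z).deriv] at this



/-- the F map in w = -1/z coordinates -/
def F (w : ℂ) : ℂ := w + 1 + (w - 1)⁻¹

/-- the attracting petal -/
def Om : Set ℂ := {z : ℂ | z ≠ 0 ∧ 100 < (-z⁻¹).re}

lemma w_recursion {z : ℂ} (h0 : z ≠ 0) (h1 : z ≠ -1) :
    -(Q 1 z)⁻¹ = F (-z⁻¹) := by
  have h1' : 1 + z ≠ 0 := by intro h; apply h1; linear_combination h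
  have e1 : -z⁻¹ - 1 = -((1+z)/z) := by field_simp; ring
  have e2 : (-z⁻¹ - 1)⁻¹ = -(z/(1+z)) := by rw [e1, inv_neg, inv_div]
  rw [q_factor, F, e2]
  field_simp
  ring

lemma re_inv_nonneg {u : ℂ} (h : 0 ≤ u.re) : 0 ≤ (u⁻¹).re := by
  rw [Complex.inv_re]
  exact div_nonneg h (Complex.normSq_nonneg u)

lemma re_inv_ge {u : ℂ} : -(Complex.abs u)⁻¹ ≤ (u⁻¹).re := by
  have h1 : |(u⁻¹).re| ≤ Complex.abs (u⁻¹) := Complex.abs_re_le_abs _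
  rw [map_inv₀] at h1
  have := neg_abs_le (u⁻¹).re
  linarith [abs_le.mp h1]

lemma w_ne_one {z : ℂ} (h0 : z ≠ 0) (h1 : z ≠ -1) : -z⁻¹ - 1 ≠ 0 := by
  intro h
  have h2 : z⁻¹ = -1 := by linear_combination -h
  apply h1
  rw [← inv_inv z, h2]
  norm_num

/-- basic climb step: from Re w ≥ 1 -/
lemma climb_step {z : ℂ} (h0 : z ≠ 0) (h1 : z ≠ -1) (hre : 1 ≤ (-z⁻¹).re) :
    (-z⁻¹).re + 1 ≤ (-(Q 1 z)⁻¹).re := by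
  rw [w_recursion h0 h1, F]
  have h2 : 0 ≤ ((-z⁻¹ - 1)⁻¹).re := by
    apply re_inv_nonneg
    simp only [Complex.sub_re, Complex.one_re]
    linarith
  simp only [Complex.add_re, Complex.one_re]
  linarith

lemma mem_Om_iff {z : ℂ} : z ∈ Om ↔ z ≠ 0 ∧ 100 < (-z⁻¹).re := Iff.rfl

lemma abs_le_of_re {z : ℂ} (c : ℝ) (hc : 0 < c) (h : c ≤ (-z⁻¹).re) (h0 : z ≠ 0) :
    Complex.abs z ≤ c⁻¹ := by
  have h1 : c ≤ Complex.abs (-z⁻¹) := le_trans h (Complex.re_le_abs _)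
  rw [map_neg_eq_map, map_inv₀] at h1
  have h2 : 0 < Complex.abs z := Complex.abs.pos h0
  rw [le_inv_comm₀ hc h2] at h1
  exact h1

/-- absorbed if Re w ≥ 1 -/
lemma absorbed_of_re_ge_one {z : ℂ} (h0 : z ≠ 0) (h1 : z ≠ -1) (hre : 1 ≤ (-z⁻¹).re) :
    ∃ n : ℕ, (Q 1)^[n] z ∈ Om := by
  have key : ∀ j : ℕ, (Q 1)^[j] z ≠ 0 ∧ 1 + j ≤ (-((Q 1)^[j] z)⁻¹).re := by
    intro j
    induction j with
    | zero => exact ⟨h0, by simpa using hre⟩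
    | succ j ih =>
      obtain ⟨hz0, hzre⟩ := ih
      have hne1 : (Q 1)^[j] z ≠ -1 := by
        intro h
        rw [h] at hzre
        norm_num at hzre
        -- (-(-1)⁻¹).re = 1
        have : 1 + (j:ℝ) ≤ 1 := by simpa using hzre
        have hj : j = 0 := by
          by_contra hj
          have : 1 ≤ (j:ℝ) := by exact_mod_cast Nat.one_le_iff_ne_zero.mpr hj
          linarith
        rw [hj] at h
        exact h1 (by simpa using h)
      constructor
      · rw [Function.iterate_succ_apply']
        exact q_ne_zero hz0 hne1
      · rw [Function.iterate_succ_apply']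
        have := climb_step hz0 hne1 (by linarith [hzre])
        push_cast
        linarith
  refine ⟨100, (key 100).1, ?_⟩
  have := (key 100).2
  push_cast at this
  linarith

lemma Om_fwd {z : ℂ} (hz : z ∈ Om) : Q 1 z ∈ Om := by
  obtain ⟨h0, hre⟩ := hz
  have h1 : z ≠ -1 := by
    intro h
    rw [h] at hre
    norm_num at hre
  refine ⟨q_ne_zero h0 h1, ?_⟩
  have := climb_step h0 h1 (by linarith)
  linarith

lemma Om_abs {z : ℂ} (hz : z ∈ Om) : Complex.abs z ≤ (100:ℝ)⁻¹ :=
  abs_le_of_re 100 (by norm_num) (le_of_lt hz.2) hz.1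

lemma Om_iter {z : ℂ} (hz : z ∈ Om) (n : ℕ) : (Q 1)^[n] z ∈ Om := by
  induction n with
  | zero => exact hz
  | succ n ih => rw [Function.iterate_succ_apply']; exact Om_fwd ih

lemma Om_subset_K : Om ⊆ K := by
  intro z hz
  exact ⟨1, fun n => le_trans (Om_abs (Om_iter hz n)) (by norm_num)⟩

lemma Om_open : IsOpen Om := by
  have : Om = {(0:ℂ)}ᶜ ∩ (fun z : ℂ => (-z⁻¹).re) ⁻¹' (Ioi 100) := by
    ext z
    simp [Om, mem_Om_iff, and_comm]
  rw [this]
  apply ContinuousOn.isOpen_inter_preimage ?_ (isOpen_compl_singleton) isOpen_Ioi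
  apply Complex.continuous_re.comp_continuousOn
  apply ContinuousOn.neg
  intro z hz
  exact (continuousAt_inv₀ hz).continuousWithinAt

lemma Om_subset_interior : Om ⊆ interior K := interior_maximal Om_subset_K Om_open

lemma Om_nonempty : Om.Nonempty := by
  refine ⟨-(101:ℂ)⁻¹, by norm_num, ?_⟩
  have e : (-(-(101:ℂ)⁻¹)⁻¹) = 101 := by rw [inv_neg, neg_neg, inv_inv]
  rw [e]
  norm_num



lemma absorbed_of_abs_le_one {z : ℂ} (h0 : z ≠ 0) (h1 : z ≠ -1)
    (h : Complex.abs (1 + 2*z) ≤ 1) : ∃ n : ℕ, (Q 1)^[n] z ∈ Om := by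
  apply absorbed_of_re_ge_one h0 h1
  have hns : Complex.normSq (1 + 2*z) ≤ 1 := by
    have := Complex.normSq_eq_abs (1+2*z)
    nlinarith [Complex.abs.nonneg (1+2*z)]
  have hkey : Complex.normSq z + z.re ≤ 0 := by
    rw [Complex.normSq_apply] at hns ⊢
    simp only [Complex.add_re, Complex.add_im, Complex.one_re, Complex.one_im,
      Complex.mul_re, Complex.mul_im] at hns
    norm_num at hns
    nlinarith
  have hpos : 0 < Complex.normSq z := Complex.normSq_pos.mpr h0
  simp only [Complex.neg_re, Complex.inv_re]
  rw [le_neg, div_le_iff₀ hpos]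
  linarith

/-- climb step near 0 -/
lemma climb_small {z : ℂ} (h0 : z ≠ 0) (h1 : z ≠ -1) (hsm : Complex.abs z ≤ 1/100) :
    (-z⁻¹).re + 1/2 ≤ (-(Q 1 z)⁻¹).re := by
  rw [w_recursion h0 h1, F]
  have habs : (100:ℝ) ≤ Complex.abs (-z⁻¹) := by
    rw [map_neg_eq_map, map_inv₀]
    rw [le_inv_comm₀ (by norm_num) (Complex.abs.pos h0)]
    linarith
  have habs1 : (99:ℝ) ≤ Complex.abs (-z⁻¹ - 1) := by
    have h5 : Complex.abs (-z⁻¹) ≤ Complex.abs (-z⁻¹ - 1) + 1 := by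
      have := Complex.abs.add_le (-z⁻¹ - 1) 1
      simpa using this
    linarith
  have hre : -(1/99 : ℝ) ≤ ((-z⁻¹ - 1)⁻¹).re := by
    have h3 := re_inv_ge (u := -z⁻¹ - 1)
    have h4 : (Complex.abs (-z⁻¹ - 1))⁻¹ ≤ 1/99 := by
      rw [inv_le_comm₀ (by linarith) (by norm_num)]
      linarith
    linarith
  simp only [Complex.add_re, Complex.one_re]
  linarith

/-- products with nonneg increments -/
lemma one_add_sum_le_prod (f : ℕ → ℝ) (hf : ∀ k, 0 ≤ f k) (n : ℕ) :
    1 + ∑ k ∈ Finset.range n, f k ≤ ∏ k ∈ Finset.range n, (1 + f k) := by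
  induction n with
  | zero => simp
  | succ n ih =>
    rw [Finset.sum_range_succ, Finset.prod_range_succ]
    have hprod : (0:ℝ) ≤ ∏ k ∈ Finset.range n, (1 + f k) :=
      Finset.prod_nonneg fun k _ => by linarith [hf k]
    have hsum : (0:ℝ) ≤ ∑ k ∈ Finset.range n, f k :=
      Finset.sum_nonneg fun k _ => hf k
    nlinarith [hf n, ih]

theorem absorption {z : ℂ} (hz : z ∈ interior K) : ∃ n : ℕ, (Q 1)^[n] z ∈ Om := by
  by_contra hNA
  push_neg at hNA
  set zz : ℕ → ℂ := fun k => (Q 1)^[k] z with hzz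
  have hzsucc : ∀ k, zz (k+1) = Q 1 (zz k) := fun k => Function.iterate_succ_apply' _ _ _
  have hne0 : ∀ k, zz k ≠ 0 := fun k => iter_ne_zero hz k
  have hne1 : ∀ k, zz k ≠ -1 := fun k => iter_ne_neg_one hz k
  have hK2 : ∀ k, Complex.abs (zz k) ≤ 2 := fun k => K_iter_le_two (interior_subset hz) k
  -- no iterate is absorbed at any later time
  have hNA2 : ∀ k m : ℕ, (Q 1)^[m] (zz k) ∉ Om := by
    intro k m
    rw [hzz]
    simp only
    rw [← Function.iterate_add_apply]
    exact hNA (m + k)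
  -- all orbit points have |1+2z| > 1
  have hgt : ∀ k, 1 < Complex.abs (1 + 2 * zz k) := by
    intro k
    by_contra h
    push_neg at h
    obtain ⟨m, hm⟩ := absorbed_of_abs_le_one (hne0 k) (hne1 k) h
    exact hNA2 k m hm
  -- ball inside K
  obtain ⟨r, hr, hball⟩ : ∃ r > 0, ball z r ⊆ K := by
    obtain ⟨ε, hε, hb⟩ := Metric.mem_nhds_iff.mp (mem_interior_iff_mem_nhds.mp hz)
    exact ⟨ε, hε, hb⟩
  -- summability of x k
  set x : ℕ → ℝ := fun k => Complex.abs (1 + 2 * zz k) - 1 with hx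
  have hx0 : ∀ k, 0 ≤ x k := fun k => by have := hgt k; simp [hx]; linarith
  have hsum : ∀ n, ∑ k ∈ Finset.range n, x k ≤ 5 / r := by
    intro n
    have h1 := deriv_prod_bound hr hball n
    rw [map_prod] at h1
    have h2 : ∏ k ∈ Finset.range n, Complex.abs (1 + 2 * zz k)
        = ∏ k ∈ Finset.range n, (1 + x k) := by
      apply Finset.prod_congr rfl
      intro k _
      simp [hx]
    rw [h2] at h1
    have := one_add_sum_le_prod x hx0 n
    linarith
  have hsummable : Summable x := summable_of_sum_range_le hx0 hsum
  have htend : Filter.Tendsto x atTop (nhds 0) := hsummable.tendsto_atTop_zero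
  have hev : ∀ᶠ k in atTop, x k < 1/40000 := htend.eventually (gt_mem_nhds (by norm_num))
  obtain ⟨N, hN⟩ := eventually_atTop.mp hev
  -- dichotomy
  have hdich : ∀ k ≥ N, Complex.abs (zz k) ≤ 1/100 ∨ Complex.abs (zz k + 1) ≤ 1/100 := by
    intro k hk
    set b : ℂ := 1 + 2 * zz k with hb
    set c : ℂ := 1 + 2 * zz (k+1) with hc
    have hcb : c = (b^2 + 1)/2 := by
      rw [hb, hc, hzsucc, q_def]
      ring
    have hbabs : Complex.abs b ≤ 1 + 1/40000 := by
      have := hN k hk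
      simp only [hx] at this
      linarith
    have hcabs : 1 ≤ Complex.abs c := le_of_lt (hgt (k+1))
    -- normSq computations
    have h1 : 4 ≤ Complex.normSq (b^2 + 1) := by
      have : Complex.normSq c = Complex.normSq (b^2+1) / 4 := by
        rw [hcb]
        rw [Complex.normSq_div]
        norm_num
      have h2 : 1 ≤ Complex.normSq c := by
        rw [Complex.normSq_eq_abs]
        nlinarith
      rw [this] at h2
      linarith
    have h2 : Complex.normSq (b^2+1) = Complex.normSq (b^2) + 1 + 2 * (b^2).re := by
      have := Complex.normSq_add (b^2) 1
      simpa using this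
    have h3 : Complex.normSq (b^2) ≤ (1+1/40000)^4 := by
      rw [Complex.normSq_eq_abs, map_pow]
      have h0 : (0:ℝ) ≤ Complex.abs b := Complex.abs.nonneg b
      calc (Complex.abs b ^ 2)^2 = Complex.abs b ^ 4 := by ring
        _ ≤ (1+1/40000)^4 := pow_le_pow_left₀ h0 hbabs 4
    have h4 : Complex.normSq (b^2 - 1) = Complex.normSq (b^2) + 1 - 2 * (b^2).re := by
      have := Complex.normSq_sub (b^2) 1
      simpa using this
    have h5 : Complex.normSq (b^2 - 1) ≤ 1/2500 := by nlinarith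
    have h6 : Complex.abs (b^2 - 1) ≤ 1/50 := by
      have e := Complex.normSq_eq_abs (b^2-1)
      nlinarith [Complex.abs.nonneg (b^2-1)]
    -- |z(z+1)| = |b²-1|/4
    have h7 : Complex.abs (zz k) * Complex.abs (zz k + 1) ≤ 1/200 := by
      have e : (zz k) * (zz k + 1) = (b^2 - 1)/4 := by rw [hb]; ring
      have := congrArg Complex.abs e
      rw [map_mul] at this
      rw [this, map_div₀]
      have : Complex.abs (4:ℂ) = 4 := by show ‖(4:ℂ)‖ = 4; norm_num
      rw [this]
      linarith
    have h8 : 1 ≤ Complex.abs (zz k) + Complex.abs (zz k + 1) := by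
      have := Complex.abs.sub_le_add (zz k + 1) (zz k)
      have e : (zz k + 1) - zz k = 1 := by ring
      rw [e] at this
      simp at this
      linarith
    rcases le_total (Complex.abs (zz k)) (Complex.abs (zz k + 1)) with hle | hle
    · left
      have : 1/2 ≤ Complex.abs (zz k + 1) := by linarith
      nlinarith [Complex.abs.nonneg (zz k)]
    · right
      have : 1/2 ≤ Complex.abs (zz k) := by linarith
      nlinarith [Complex.abs.nonneg (zz k + 1)]
  -- find k₀ with |zz k₀| small
  obtain ⟨k₀, hk₀N, hk₀⟩ : ∃ k₀ ≥ N, Complex.abs (zz k₀) ≤ 1/100 := by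
    rcases hdich N le_rfl with h | h
    · exact ⟨N, le_rfl, h⟩
    · refine ⟨N+1, by omega, ?_⟩
      have h1 : Complex.abs (zz (N+1)) ≤ 1/50 := by
        rw [hzsucc, q_factor, map_mul]
        have e : Complex.abs (1 + zz N) = Complex.abs (zz N + 1) := by rw [add_comm]
        rw [e]
        nlinarith [hK2 N, Complex.abs.nonneg (zz N), Complex.abs.nonneg (zz N + 1)]
      rcases hdich (N+1) (by omega) with h2 | h2
      · exact h2
      · exfalso
        have := Complex.abs.sub_le_add (zz (N+1) + 1) (zz (N+1))
        have e : (zz (N+1) + 1) - zz (N+1) = 1 := by ring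
        rw [e] at this
        simp at this
        linarith
  -- persistence
  have hpersist : ∀ j, Complex.abs (zz (k₀ + j)) ≤ 1/100 := by
    intro j
    induction j with
    | zero => simpa using hk₀
    | succ j ih =>
      have h1 : Complex.abs (zz (k₀ + j + 1)) ≤ 1/50 := by
        rw [hzsucc, q_factor, map_mul]
        have e : Complex.abs (1 + zz (k₀+j)) = Complex.abs (zz (k₀+j) + 1) := by rw [add_comm]
        rw [e]
        have h2 : Complex.abs (zz (k₀+j) + 1) ≤ 1 + 1/100 := by
          calc Complex.abs (zz (k₀+j) + 1) ≤ Complex.abs (zz (k₀+j)) + 1 := by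
                have := Complex.abs.add_le (zz (k₀+j)) 1
                simpa using this
            _ ≤ 1 + 1/100 := by linarith
        nlinarith [Complex.abs.nonneg (zz (k₀+j))]
      have e2 : k₀ + (j+1) = (k₀ + j) + 1 := by omega
      rw [e2]
      rcases hdich (k₀+j+1) (by omega) with h2 | h2
      · exact h2
      · exfalso
        have := Complex.abs.sub_le_add (zz (k₀+j+1) + 1) (zz (k₀+j+1))
        have e : (zz (k₀+j+1) + 1) - zz (k₀+j+1) = 1 := by ring
        rw [e] at this
        simp at this
        linarith
  -- climb
  have hclimb : ∀ j, (-(zz k₀)⁻¹).re + j * (1/2) ≤ (-(zz (k₀+j))⁻¹).re := by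
    intro j
    induction j with
    | zero => simp
    | succ j ih =>
      have e2 : k₀ + (j+1) = (k₀ + j) + 1 := by omega
      rw [e2, hzsucc]
      have := climb_small (hne0 (k₀+j)) (hne1 (k₀+j)) (hpersist j)
      push_cast
      linarith
  obtain ⟨j, hj⟩ := exists_nat_gt (2 * (1 - (-(zz k₀)⁻¹).re))
  have hfin : 1 ≤ (-(zz (k₀+j))⁻¹).re := by
    have := hclimb j
    nlinarith
  obtain ⟨m, hm⟩ := absorbed_of_re_ge_one (hne0 (k₀+j)) (hne1 (k₀+j)) hfin
  exact hNA2 (k₀+j) m hm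



/-- harmonic partial sums -/
def Hr (n : ℕ) : ℝ := ∑ k ∈ Finset.range n, 1/((k:ℝ)+1)

lemma Hr_nonneg (n : ℕ) : 0 ≤ Hr n :=
  Finset.sum_nonneg fun k _ => by positivity

lemma Hr_le_sqrt (n : ℕ) : Hr n ≤ 2 * Real.sqrt n := by
  induction n with
  | zero => simp [Hr]
  | succ n ih =>
    have hHr : Hr (n+1) = Hr n + 1/((n:ℝ)+1) := by
      rw [Hr, Hr, Finset.sum_range_succ]
    set s := Real.sqrt n with hs
    set t := Real.sqrt ((n:ℝ)+1) with ht
    have hs2 : s^2 = n := Real.sq_sqrt (by positivity)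
    have ht2 : t^2 = (n:ℝ)+1 := Real.sq_sqrt (by positivity)
    have hs0 : 0 ≤ s := Real.sqrt_nonneg _
    have ht1 : 1 ≤ t := by
      rw [ht]
      exact Real.one_le_sqrt.mpr (by push_cast; linarith)
    have hst : s ≤ t := by
      rw [hs, ht]
      exact Real.sqrt_le_sqrt (by push_cast; linarith)
    have key : 1/((n:ℝ)+1) ≤ 2*(t - s) := by
      have h1 : (t-s)*(t+s) = 1 := by nlinarith
      have h3 : 0 < t + s := by linarith
      have h4 : t - s = 1/(t+s) := by
        field_simp
        linear_combination h1
      rw [← ht2, h4, show 2*(1/(t+s)) = 2/(t+s) by ring]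
      rw [div_le_div_iff₀ (by positivity) h3]
      nlinarith
    have hcast : Real.sqrt (((n:ℕ)+1 : ℕ)) = t := by
      rw [ht]; norm_cast
    rw [hHr, hcast]
    linarith [ih]

lemma sum_sq_le' (n : ℕ) : ∑ k ∈ Finset.range (n+1), 1/((k:ℝ)+1)^2 ≤ 2 - 1/((n:ℝ)+1) := by
  induction n with
  | zero => norm_num
  | succ n ih =>
    rw [Finset.sum_range_succ]
    have h : 1/(((n:ℝ)+1)+1)^2 ≤ 1/((n:ℝ)+1) - 1/(((n:ℝ)+1)+1) := by
      rw [div_sub_div _ _ (by positivity) (by positivity)]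
      rw [div_le_div_iff₀ (by positivity) (by positivity)]
      nlinarith [sq_nonneg ((n:ℝ)+1)]
    push_cast at ih ⊢
    linarith

lemma sum_sq_le (n : ℕ) : ∑ k ∈ Finset.range n, 1/((k:ℝ)+1)^2 ≤ 2 := by
  cases n with
  | zero => simp
  | succ n =>
    have h1 := sum_sq_le' n
    have h2 : (0:ℝ) < 1/((n:ℝ)+1) := by positivity
    linarith

lemma sum_three_half_le (n : ℕ) :
    ∑ k ∈ Finset.range n, 1/(((k:ℝ)+1) * Real.sqrt ((k:ℝ)+1)) ≤ 3 := by
  have key : ∀ m : ℕ, 1 ≤ m →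
      ∑ k ∈ Finset.range m, 1/(((k:ℝ)+1) * Real.sqrt ((k:ℝ)+1)) ≤ 3 - 2/Real.sqrt m := by
    intro m hm
    induction m, hm using Nat.le_induction with
    | base => norm_num
    | succ n hn ih =>
      rw [Finset.sum_range_succ]
      set s := Real.sqrt n with hs
      set t := Real.sqrt ((n:ℝ)+1) with ht
      have hs2 : s^2 = n := Real.sq_sqrt (by positivity)
      have ht2 : t^2 = (n:ℝ)+1 := Real.sq_sqrt (by positivity)
      have hs1 : 1 ≤ s := by
        rw [hs, ← Real.sqrt_one]
        apply Real.sqrt_le_sqrt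
        exact_mod_cast hn
      have hst : s ≤ t := by
        rw [hs, ht]
        exact Real.sqrt_le_sqrt (by linarith)
      have ht0 : 0 < t := by linarith
      have hterm : 1/(((n:ℝ)+1) * t) ≤ 2/s - 2/t := by
        have h1 : (t-s)*(t+s) = 1 := by nlinarith
        have h3 : 0 < t + s := by linarith
        have h2 : 2/s - 2/t = 2/(s*t*(t+s)) := by
          rw [div_sub_div _ _ (by positivity) (by positivity)]
          rw [div_eq_div_iff (by positivity) (by positivity)]
          linear_combination (2*s*t) * h1
        rw [h2, div_le_div_iff₀ (by positivity) (by positivity)]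
        calc 1*(s*t*(t+s)) = s*t^2 + s^2*t := by ring
          _ = s*((n:ℝ)+1) + (n:ℝ)*t := by rw [hs2, ht2]
          _ ≤ 2*(((n:ℝ)+1)*t) := by
              have h5 := mul_le_mul_of_nonneg_right hst (show (0:ℝ) ≤ (n:ℝ)+1 by positivity)
              nlinarith
      have hcast : Real.sqrt (((n:ℕ)+1 : ℕ)) = t := by rw [ht]; norm_cast
      rw [hcast]
      have hs0 : 0 < s := by linarith
      linarith [ih]
  cases n with
  | zero => simp
  | succ n =>
    have h1 := key (n+1) (by omega)
    have h2 : 0 < Real.sqrt (((n:ℕ)+1 : ℕ)) := by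
      apply Real.sqrt_pos.mpr
      push_cast
      positivity
    have h3 : 0 ≤ 2/Real.sqrt (((n:ℕ)+1 : ℕ)) := by positivity
    linarith

lemma sum_L_le (n : ℕ) : ∑ k ∈ Finset.range n, 8/(((k:ℝ)+197)*((k:ℝ)+198)) ≤ 1/20 := by
  have e : ∀ k ∈ Finset.range n, 8/(((k:ℝ)+197)*((k:ℝ)+198))
      = (fun j : ℕ => 8/((j:ℝ)+197)) k - (fun j : ℕ => 8/((j:ℝ)+197)) (k+1) := by
    intro k _
    simp only []
    push_cast
    have h1 : ((k:ℝ)+197) ≠ 0 := by positivity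
    have h2 : ((k:ℝ)+198) ≠ 0 := by positivity
    field_simp
    ring
  rw [Finset.sum_congr rfl e, Finset.sum_range_sub' (fun j : ℕ => 8/((j:ℝ)+197)) n]
  have h1 : (0:ℝ) ≤ 8/((n:ℝ)+197) := by positivity
  norm_num
  linarith



def HH : Set ℂ := {w : ℂ | 100 < w.re}
def W (k : ℕ) (w : ℂ) : ℂ := F^[k] w
def Fd (u : ℂ) : ℂ := 1 - ((u-1)^2)⁻¹
def DW (k : ℕ) (w : ℂ) : ℂ := ∏ j ∈ Finset.range k, Fd (W j w)
def tt (k : ℕ) (w : ℂ) : ℂ := (W k w - 1)⁻¹ - ((k:ℂ)+1)⁻¹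
def Dtt (k : ℕ) (w : ℂ) : ℂ := -(DW k w) / (W k w - 1)^2


lemma HH_open : IsOpen HH := isOpen_lt continuous_const Complex.continuous_re

lemma HH_convex : Convex ℝ HH := convex_halfSpace_re_gt 100

lemma W_succ (k : ℕ) (w : ℂ) : W (k+1) w = F (W k w) := Function.iterate_succ_apply' F k w

lemma W_zero (w : ℂ) : W 0 w = w := rfl

/-- real part estimate for the F-step -/
lemma F_re_step {w : ℂ} (hw : 99 ≤ Complex.abs (w - 1)) :
    w.re + 1 - 1/99 ≤ (F w).re ∧ (F w).re ≤ w.re + 1 + 1/99 := by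
  have h1 : Complex.abs ((w-1)⁻¹) ≤ 1/99 := by
    rw [map_inv₀]
    rw [inv_le_comm₀ (by linarith) (by norm_num)]
    linarith
  have h2 : |((w-1)⁻¹).re| ≤ 1/99 := le_trans (Complex.abs_re_le_abs _) h1
  rw [abs_le] at h2
  constructor <;> (simp only [F, Complex.add_re, Complex.one_re]; linarith [h2.1, h2.2])

/-- orbit stays in H and climbs -/
lemma W_re (k : ℕ) {w : ℂ} (hw : w ∈ HH) : 100 + (k:ℝ)*(1/2) < (W k w).re := by
  induction k with
  | zero => simpa [W_zero, HH] using hw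
  | succ k ih =>
    rw [W_succ]
    have habs : 99 ≤ Complex.abs (W k w - 1) := by
      have h1 : 99 ≤ (W k w - 1).re := by
        simp only [Complex.sub_re, Complex.one_re]
        have : (0:ℝ) ≤ (k:ℝ)*(1/2) := by positivity
        linarith
      linarith [Complex.re_le_abs (W k w - 1)]
    have := (F_re_step habs).1
    push_cast
    linarith

lemma W_mem (k : ℕ) {w : ℂ} (hw : w ∈ HH) : W k w ∈ HH := by
  have := W_re k hw
  have h2 : (0:ℝ) ≤ (k:ℝ)*(1/2) := by positivity
  simp only [HH, mem_setOf_eq]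
  linarith

lemma W_sub_one_abs (k : ℕ) {w : ℂ} (hw : w ∈ HH) :
    99 + (k:ℝ)*(1/2) ≤ Complex.abs (W k w - 1) := by
  have h1 := W_re k hw
  have h2 : 99 + (k:ℝ)*(1/2) ≤ (W k w - 1).re := by
    simp only [Complex.sub_re, Complex.one_re]
    linarith
  linarith [Complex.re_le_abs (W k w - 1)]

lemma W_sub_one_ne (k : ℕ) {w : ℂ} (hw : w ∈ HH) : W k w - 1 ≠ 0 := by
  intro h
  have := W_sub_one_abs k hw
  rw [h] at this
  simp at this
  have : (0:ℝ) ≤ (k:ℝ)*(1/2) := by positivity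
  linarith [W_sub_one_abs k hw]

/-- telescoping representation -/
lemma W_telescope (n : ℕ) (w : ℂ) :
    W n w = w + n + ∑ k ∈ Finset.range n, (W k w - 1)⁻¹ := by
  induction n with
  | zero => simp [W_zero]
  | succ n ih =>
    rw [W_succ, F, Finset.sum_range_succ]
    set u := (W n w - 1)⁻¹ with hu
    rw [ih]
    push_cast
    ring

/-- numerator bound -/
lemma W_num_bound (n : ℕ) {w : ℂ} (hw : w ∈ HH) :
    Complex.abs (W n w - ((n:ℂ)+2)) ≤ Complex.abs w + 2 + 4 * Real.sqrt n := by
  have htel := W_telescope n w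
  have hsum : Complex.abs (∑ k ∈ Finset.range n, (W k w - 1)⁻¹) ≤ 2 * Hr n := by
    calc Complex.abs (∑ k ∈ Finset.range n, (W k w - 1)⁻¹)
        ≤ ∑ k ∈ Finset.range n, Complex.abs ((W k w - 1)⁻¹) := by
          exact Complex.abs.sum_le _ _
      _ ≤ ∑ k ∈ Finset.range n, 2/((k:ℝ)+1) := by
          apply Finset.sum_le_sum
          intro k _
          rw [map_inv₀]
          have h1 := W_sub_one_abs k hw
          have hk2 : (0:ℝ) ≤ (k:ℝ)*(1/2) := by positivity
          have h2 : ((k:ℝ)+1)/2 ≤ Complex.abs (W k w - 1) := by linarith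
          have hpos : (0:ℝ) < Complex.abs (W k w - 1) := by linarith
          rw [inv_le_comm₀ hpos (by positivity)]
          rw [show (2/((k:ℝ)+1))⁻¹ = ((k:ℝ)+1)/2 by field_simp]
          exact h2
      _ = 2 * Hr n := by
          rw [Hr, Finset.mul_sum]
          apply Finset.sum_congr rfl
          intro k _
          ring
  have he : W n w - ((n:ℂ)+2) = (w - 2) + ∑ k ∈ Finset.range n, (W k w - 1)⁻¹ := by
    rw [htel]; ring
  rw [he]
  calc Complex.abs ((w - 2) + ∑ k ∈ Finset.range n, (W k w - 1)⁻¹)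
      ≤ Complex.abs (w-2) + Complex.abs (∑ k ∈ Finset.range n, (W k w - 1)⁻¹) :=
        Complex.abs.add_le _ _
    _ ≤ (Complex.abs w + 2) + 2 * Hr n := by
        have h3 : Complex.abs (w - 2) ≤ Complex.abs w + 2 := by
          calc Complex.abs (w-2) ≤ Complex.abs w + Complex.abs (-2 : ℂ) := by
                have := Complex.abs.add_le w (-2)
                simpa [sub_eq_add_neg] using this
            _ = Complex.abs w + 2 := by
                rw [map_neg_eq_map, show Complex.abs (2:ℂ) = 2 from by show ‖(2:ℂ)‖ = 2; norm_num]
        linarith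
    _ ≤ Complex.abs w + 2 + 4 * Real.sqrt n := by linarith [Hr_le_sqrt n]

/-- term bound for the series -/
lemma tt_bound (k : ℕ) {w : ℂ} (hw : w ∈ HH) {C : ℝ} (hC : Complex.abs w ≤ C) :
    Complex.abs (tt k w) ≤ (2*C+4)/((k:ℝ)+1)^2 + 8/(((k:ℝ)+1) * Real.sqrt ((k:ℝ)+1)) := by
  have ha : W k w - 1 ≠ 0 := W_sub_one_ne k hw
  have hb : ((k:ℂ)+1) ≠ 0 := by
    have h5 : ((k+1 : ℕ) : ℂ) ≠ 0 := Nat.cast_ne_zero.mpr (Nat.succ_ne_zero k)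
    push_cast at h5
    exact h5
  have hid : tt k w = (((k:ℂ)+2) - W k w) * ((W k w - 1)⁻¹ * ((k:ℂ)+1)⁻¹) := by
    rw [tt]
    field_simp
    ring
  rw [hid, map_mul, map_mul, map_inv₀, map_inv₀]
  have h1 : Complex.abs (((k:ℂ)+2) - W k w) ≤ C + 2 + 4*Real.sqrt k := by
    have := W_num_bound k hw
    rw [← map_neg_eq_map]
    have he : -(((k:ℂ)+2) - W k w) = W k w - ((k:ℂ)+2) := by ring
    rw [he]
    linarith
  have h2 : (Complex.abs (W k w - 1))⁻¹ ≤ 2/((k:ℝ)+1) := by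
    have h3 := W_sub_one_abs k hw
    have hk2 : (0:ℝ) ≤ (k:ℝ)*(1/2) := by positivity
    have hpos : (0:ℝ) < Complex.abs (W k w - 1) := by linarith
    rw [inv_le_comm₀ hpos (by positivity)]
    rw [show (2/((k:ℝ)+1))⁻¹ = ((k:ℝ)+1)/2 by field_simp]
    linarith
  have h3 : (Complex.abs ((k:ℂ)+1))⁻¹ = 1/((k:ℝ)+1) := by
    have : ((k:ℂ)+1) = (((k:ℝ)+1 : ℝ) : ℂ) := by push_cast; ring
    rw [this, Complex.abs_ofReal, abs_of_pos (by positivity)]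
    ring
  rw [h3]
  have hknn : (0:ℝ) ≤ Real.sqrt k := Real.sqrt_nonneg _
  have hge : (0:ℝ) < ((k:ℝ)+1) := by positivity
  have hCpos : 0 ≤ C := le_trans (Complex.abs.nonneg w) hC
  have hsq : Real.sqrt k ≤ Real.sqrt ((k:ℝ)+1) := Real.sqrt_le_sqrt (by linarith)
  have hsq1 : 1 ≤ Real.sqrt ((k:ℝ)+1) := Real.one_le_sqrt.mpr (by linarith)
  have hmain : (C + 2 + 4*Real.sqrt k) * (2/((k:ℝ)+1) * (1/((k:ℝ)+1)))
      ≤ (2*C+4)/((k:ℝ)+1)^2 + 8/(((k:ℝ)+1) * Real.sqrt ((k:ℝ)+1)) := by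
    have e1 : (C + 2 + 4*Real.sqrt k) * (2/((k:ℝ)+1) * (1/((k:ℝ)+1)))
        = (2*C+4)/((k:ℝ)+1)^2 + 8*Real.sqrt k/((k:ℝ)+1)^2 := by
      field_simp
      ring
    rw [e1]
    have e2 : 8*Real.sqrt k/((k:ℝ)+1)^2 ≤ 8/(((k:ℝ)+1) * Real.sqrt ((k:ℝ)+1)) := by
      have hsqsq : Real.sqrt ((k:ℝ)+1) * Real.sqrt ((k:ℝ)+1) = (k:ℝ)+1 :=
        Real.mul_self_sqrt (by positivity)
      have hX : (0:ℝ) < ((k:ℝ)+1) * Real.sqrt ((k:ℝ)+1) := by positivity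
      rw [div_le_div_iff₀ (by positivity) hX]
      calc 8*Real.sqrt k * (((k:ℝ)+1) * Real.sqrt ((k:ℝ)+1))
          ≤ 8*Real.sqrt ((k:ℝ)+1) * (((k:ℝ)+1) * Real.sqrt ((k:ℝ)+1)) := by
            apply mul_le_mul_of_nonneg_right _ (le_of_lt hX)
            linarith
        _ = 8*((Real.sqrt ((k:ℝ)+1) * Real.sqrt ((k:ℝ)+1)) * ((k:ℝ)+1)) := by ring
        _ = 8*(((k:ℝ)+1) * ((k:ℝ)+1)) := by rw [hsqsq]
        _ = 8*((k:ℝ)+1)^2 := by ring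
    linarith
  calc Complex.abs (((k:ℂ)+2) - W k w) * ((Complex.abs (W k w -1))⁻¹ * (1/((k:ℝ)+1)))
      ≤ (C + 2 + 4*Real.sqrt k) * (2/((k:ℝ)+1) * (1/((k:ℝ)+1))) := by
        apply mul_le_mul h1 _ (by positivity) (by positivity)
        apply mul_le_mul_of_nonneg_right h2 (by positivity)
    _ ≤ _ := hmain




def LL (k : ℕ) : ℝ := 8/(((k:ℝ)+197)*((k:ℝ)+198))


lemma sum_LL_le (n : ℕ) : ∑ k ∈ Finset.range n, LL k ≤ 1/20 := sum_L_le n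

lemma LL_nonneg (k : ℕ) : 0 ≤ LL k := by rw [LL]; positivity

lemma prod_le_one_add_two_sum (f : ℕ → ℝ) (hf : ∀ k, 0 ≤ f k)
    (hs : ∀ n, ∑ k ∈ Finset.range n, f k ≤ 1/2) (n : ℕ) :
    ∏ k ∈ Finset.range n, (1 + f k) ≤ 1 + 2 * ∑ k ∈ Finset.range n, f k := by
  induction n with
  | zero => simp
  | succ n ih =>
    rw [Finset.prod_range_succ, Finset.sum_range_succ]
    have h1 : (0:ℝ) ≤ ∑ k ∈ Finset.range n, f k := Finset.sum_nonneg fun k _ => hf k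
    have h2 := hs n
    have h3 : (0:ℝ) ≤ ∏ k ∈ Finset.range n, (1 + f k) :=
      Finset.prod_nonneg fun k _ => by linarith [hf k]
    nlinarith [hf n]

lemma hasDerivAt_F {u : ℂ} (hu : u - 1 ≠ 0) : HasDerivAt F (Fd u) u := by
  have h1 : HasDerivAt (fun w : ℂ => w + 1) 1 u := (hasDerivAt_id u).add_const 1
  have h2 : HasDerivAt (fun w : ℂ => (w - 1)⁻¹) (-1 / (u-1)^2) u := by
    have h3 : HasDerivAt (fun w : ℂ => w - 1) 1 u := (hasDerivAt_id u).sub_const 1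
    exact h3.inv hu
  have := h1.add h2
  have e : (1 : ℂ) + (-1/(u-1)^2) = Fd u := by
    rw [Fd]
    field_simp
    ring
  rw [e] at this
  exact this

lemma W_hasDerivAt (k : ℕ) {w : ℂ} (hw : w ∈ HH) : HasDerivAt (W k) (DW k w) w := by
  induction k with
  | zero =>
    have : DW 0 w = 1 := by simp [DW]
    rw [this]
    exact hasDerivAt_id w
  | succ k ih =>
    have hF : HasDerivAt F (Fd (W k w)) (W k w) := hasDerivAt_F (W_sub_one_ne k hw)
    have hcomp := hF.comp w ih
    have e1 : (fun w => F (W k w)) = W (k+1) := by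
      funext v
      rw [W_succ]
    have e2 : Fd (W k w) * DW k w = DW (k+1) w := by
      rw [DW, DW, Finset.prod_range_succ]
      ring
    rw [← e1, ← e2]
    exact hcomp

lemma Fd_abs_le (j : ℕ) {w : ℂ} (hw : w ∈ HH) :
    Complex.abs (Fd (W j w)) ≤ 1 + 4/(((j:ℝ)+197)*((j:ℝ)+198)) := by
  rw [Fd]
  have h1 := W_sub_one_abs j hw
  have hj : (0:ℝ) ≤ (j:ℝ) := Nat.cast_nonneg j
  calc Complex.abs (1 - ((W j w - 1)^2)⁻¹)
      ≤ Complex.abs (1:ℂ) + Complex.abs (((W j w - 1)^2)⁻¹) := by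
        have := Complex.abs.add_le (1:ℂ) (-((W j w - 1)^2)⁻¹)
        simpa [sub_eq_add_neg] using this
    _ = 1 + (Complex.abs (W j w - 1))⁻¹^2 := by
        rw [map_inv₀, map_pow]
        norm_num
    _ ≤ 1 + 4/(((j:ℝ)+197)*((j:ℝ)+198)) := by
        have h2 : ((j:ℝ)+198)/2 ≤ Complex.abs (W j w - 1) := by linarith
        have h3 : (Complex.abs (W j w - 1))⁻¹ ≤ 2/((j:ℝ)+198) := by
          have hpos : (0:ℝ) < Complex.abs (W j w - 1) := by linarith
          rw [inv_le_comm₀ hpos (by positivity)]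
          rw [show (2/((j:ℝ)+198))⁻¹ = ((j:ℝ)+198)/2 by field_simp]
          exact h2
        have h4 : (Complex.abs (W j w - 1))⁻¹^2 ≤ (2/((j:ℝ)+198))^2 := by
          apply pow_le_pow_left₀ (by positivity) h3
        have h5 : (2/((j:ℝ)+198))^2 ≤ 4/(((j:ℝ)+197)*((j:ℝ)+198)) := by
          rw [div_pow, div_le_div_iff₀ (by positivity) (by positivity)]
          nlinarith
        linarith

lemma DW_bound (k : ℕ) {w : ℂ} (hw : w ∈ HH) : Complex.abs (DW k w) ≤ 2 := by
  rw [DW, map_prod]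
  have h1 : ∏ j ∈ Finset.range k, Complex.abs (Fd (W j w))
      ≤ ∏ j ∈ Finset.range k, (1 + 4/(((j:ℝ)+197)*((j:ℝ)+198))) := by
    apply Finset.prod_le_prod
    · intro j _; exact Complex.abs.nonneg _
    · intro j _; exact Fd_abs_le j hw
  have h2 : ∏ j ∈ Finset.range k, (1 + 4/(((j:ℝ)+197)*((j:ℝ)+198)))
      ≤ 1 + 2 * ∑ j ∈ Finset.range k, 4/(((j:ℝ)+197)*((j:ℝ)+198)) := by
    apply prod_le_one_add_two_sum
    · intro j; positivity
    · intro n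
      have := sum_L_le n
      have e : ∑ j ∈ Finset.range n, 4/(((j:ℝ)+197)*((j:ℝ)+198))
          = (1/2) * ∑ j ∈ Finset.range n, 8/(((j:ℝ)+197)*((j:ℝ)+198)) := by
        rw [Finset.mul_sum]
        apply Finset.sum_congr rfl
        intro j _
        ring
      rw [e]
      linarith
  have h3 : ∑ j ∈ Finset.range k, 4/(((j:ℝ)+197)*((j:ℝ)+198)) ≤ 1/40 := by
    have := sum_L_le k
    have e : ∑ j ∈ Finset.range k, 4/(((j:ℝ)+197)*((j:ℝ)+198))
        = (1/2) * ∑ j ∈ Finset.range k, 8/(((j:ℝ)+197)*((j:ℝ)+198)) := by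
      rw [Finset.mul_sum]
      apply Finset.sum_congr rfl
      intro j _
      ring
    rw [e]
    linarith
  linarith

lemma tt_hasDerivAt (k : ℕ) {w : ℂ} (hw : w ∈ HH) : HasDerivAt (tt k) (Dtt k w) w := by
  have h1 : HasDerivAt (fun v => W k v - 1) (DW k w) w := (W_hasDerivAt k hw).sub_const 1
  have h2 := h1.inv (W_sub_one_ne k hw)
  have h3 := h2.sub_const (((k:ℂ)+1)⁻¹)
  have e : -DW k w / (W k w - 1)^2 = Dtt k w := by rw [Dtt]
  exact e ▸ h3

lemma Dtt_bound (k : ℕ) {w : ℂ} (hw : w ∈ HH) : Complex.abs (Dtt k w) ≤ LL k := by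
  rw [Dtt, LL]
  rw [map_div₀, map_neg_eq_map, map_pow]
  have h1 := DW_bound k hw
  have h2 := W_sub_one_abs k hw
  have hk : (0:ℝ) ≤ (k:ℝ) := Nat.cast_nonneg k
  have h3 : ((k:ℝ)+198)/2 ≤ Complex.abs (W k w - 1) := by linarith
  have hpos : (0:ℝ) < Complex.abs (W k w - 1) := by linarith
  rw [div_le_div_iff₀ (by positivity) (by positivity)]
  have h4 : (((k:ℝ)+198)/2)^2 ≤ (Complex.abs (W k w - 1))^2 := by
    apply pow_le_pow_left₀ (by positivity) h3
  nlinarith [Complex.abs.nonneg (DW k w)]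

lemma tt_lip (k : ℕ) {w w' : ℂ} (hw : w ∈ HH) (hw' : w' ∈ HH) :
    Complex.abs (tt k w' - tt k w) ≤ LL k * Complex.abs (w' - w) := by
  have := Convex.norm_image_sub_le_of_norm_hasDerivWithin_le
    (f := tt k) (f' := fun u => Dtt k u) (s := HH) (C := LL k)
    (fun u hu => (tt_hasDerivAt k hu).hasDerivWithinAt)
    (fun u hu => Dtt_bound k hu) HH_convex hw hw'
  exact this


lemma tt_hasDerivAt' (k : ℕ) {w : ℂ} (hw : w ∈ HH) : DifferentiableAt ℂ (tt k) w :=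
  (tt_hasDerivAt k hw).differentiableAt


def uu (C : ℝ) (k : ℕ) : ℝ := (2*C+4)/((k:ℝ)+1)^2 + 8/(((k:ℝ)+1) * Real.sqrt ((k:ℝ)+1))


def gg (w : ℂ) : ℂ := ∑' k, tt k w
def phi (w : ℂ) : ℂ := w + gg w

lemma uu_nonneg (C : ℝ) (hC : 0 ≤ C) (k : ℕ) : 0 ≤ uu C k := by
  rw [uu]; positivity

lemma sum_uu_le (C : ℝ) (hC : 0 ≤ C) (n : ℕ) :
    ∑ k ∈ Finset.range n, uu C k ≤ 4*C + 32 := by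
  simp only [uu]
  rw [Finset.sum_add_distrib]
  have h1 : ∑ k ∈ Finset.range n, (2*C+4)/((k:ℝ)+1)^2
      = (2*C+4) * ∑ k ∈ Finset.range n, 1/((k:ℝ)+1)^2 := by
    rw [Finset.mul_sum]
    exact Finset.sum_congr rfl fun k _ => by ring
  have h2 : ∑ k ∈ Finset.range n, 8/(((k:ℝ)+1) * Real.sqrt ((k:ℝ)+1))
      = 8 * ∑ k ∈ Finset.range n, 1/(((k:ℝ)+1) * Real.sqrt ((k:ℝ)+1)) := by
    rw [Finset.mul_sum]
    exact Finset.sum_congr rfl fun k _ => by ring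
  rw [h1, h2]
  have h3 := sum_sq_le n
  have h4 := sum_three_half_le n
  have h5 : (0:ℝ) ≤ 2*C+4 := by linarith
  nlinarith [Finset.sum_nonneg (fun k (_ : k ∈ Finset.range n) =>
    (by positivity : (0:ℝ) ≤ 1/((k:ℝ)+1)^2))]

lemma summable_uu (C : ℝ) (hC : 0 ≤ C) : Summable (uu C) :=
  summable_of_sum_range_le (uu_nonneg C hC) (sum_uu_le C hC)

lemma tsum_uu_le (C : ℝ) (hC : 0 ≤ C) : ∑' k, uu C k ≤ 4*C + 32 :=
  Real.tsum_le_of_sum_range_le (uu_nonneg C hC) (sum_uu_le C hC)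

lemma summable_tt {w : ℂ} (hw : w ∈ HH) : Summable (fun k => tt k w) := by
  apply Summable.of_norm_bounded (summable_uu _ (Complex.abs.nonneg w))
  intro k
  exact tt_bound k hw le_rfl

lemma gg_bound {w : ℂ} (hw : w ∈ HH) {C : ℝ} (hC : Complex.abs w ≤ C) :
    Complex.abs (gg w) ≤ 4*C + 32 := by
  have hC0 : 0 ≤ C := le_trans (Complex.abs.nonneg w) hC
  have h1 : ‖∑' k, tt k w‖ ≤ ∑' k, uu C k := by
    apply tsum_of_norm_bounded (summable_uu C hC0).hasSum
    intro k
    exact tt_bound k hw hC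
  calc Complex.abs (gg w) = ‖∑' k, tt k w‖ := rfl
    _ ≤ ∑' k, uu C k := h1
    _ ≤ 4*C + 32 := tsum_uu_le C hC0

lemma summable_LL : Summable LL :=
  summable_of_sum_range_le LL_nonneg sum_LL_le

lemma tsum_LL_le : ∑' k, LL k ≤ 1/20 :=
  Real.tsum_le_of_sum_range_le LL_nonneg sum_LL_le

lemma gg_lip {w w' : ℂ} (hw : w ∈ HH) (hw' : w' ∈ HH) :
    Complex.abs (gg w' - gg w) ≤ (1/20) * Complex.abs (w' - w) := by
  have h1 : gg w' - gg w = ∑' k, (tt k w' - tt k w) :=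
    ((summable_tt hw').tsum_sub (summable_tt hw)).symm
  rw [h1]
  have h2 : ‖∑' k, (tt k w' - tt k w)‖ ≤ ∑' k, (LL k * Complex.abs (w' - w)) := by
    apply tsum_of_norm_bounded (summable_LL.mul_right (Complex.abs (w' - w))).hasSum
    intro k
    exact tt_lip k hw hw'
  have h3 : ∑' k, (LL k * Complex.abs (w' - w)) = (∑' k, LL k) * Complex.abs (w' - w) :=
    tsum_mul_right
  calc Complex.abs (∑' k, (tt k w' - tt k w)) = ‖∑' k, (tt k w' - tt k w)‖ := rfl
    _ ≤ (∑' k, LL k) * Complex.abs (w' - w) := by rw [← h3]; exact h2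
    _ ≤ (1/20) * Complex.abs (w' - w) := by
        apply mul_le_mul_of_nonneg_right tsum_LL_le (Complex.abs.nonneg _)

lemma phi_inj : Set.InjOn phi HH := by
  intro w hw w' hw' heq
  by_contra hne
  have h1 : phi w' - phi w = (w' - w) + (gg w' - gg w) := by rw [phi, phi]; ring
  have h2 : Complex.abs (w' - w) ≤ Complex.abs (gg w' - gg w) := by
    have e : (w' - w) = (phi w' - phi w) - (gg w' - gg w) := by rw [h1]; ring
    rw [e, heq]
    simp only [sub_self, zero_sub, map_neg_eq_map]
    rw [Complex.abs.map_sub]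
  have h3 := gg_lip hw hw'
  have h4 : 0 < Complex.abs (w' - w) := by
    apply Complex.abs.pos
    intro h0
    exact hne (by linear_combination -h0)
  linarith

lemma mem_HH_101 : (101:ℂ) ∈ HH := by
  simp [HH]
  norm_num

lemma abs_101 : Complex.abs (101:ℂ) = 101 := by
  rw [show (101:ℂ) = ((101:ℝ):ℂ) by norm_num, Complex.abs_ofReal]
  norm_num

lemma gg_base : Complex.abs (gg 101) ≤ 436 := by
  have := gg_bound mem_HH_101 (C := 101) (by rw [abs_101])
  linarith

/-- solvability of phi w = τ -/
lemma solve_phi (τ : ℂ)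
    (h : 436 + (1/20)*(τ.re - 101) + (1/20)*Complex.abs (τ - 101) ≤ τ.re - 101) :
    ∃ w ∈ HH, phi w = τ := by
  set x : ℝ := τ.re - 101 with hx
  have hx0 : 0 < x := by
    have h0 : 0 ≤ Complex.abs (τ - 101) := Complex.abs.nonneg _
    nlinarith
  have hSH : closedBall τ x ⊆ HH := by
    intro u hu
    rw [mem_closedBall, dist_eq_norm] at hu
    have h1 : |(u - τ).re| ≤ Complex.abs (u - τ) := Complex.abs_re_le_abs _
    simp only [HH, mem_setOf_eq]
    have h2 : (u - τ).re = u.re - τ.re := by simp [Complex.sub_re]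
    rw [h2] at h1
    have hA : Complex.abs (u - τ) ≤ x := by rwa [← Complex.norm_eq_abs]
    have h6 := (abs_le.mp h1).1
    simp only [hx] at hA h6 ⊢
    linarith
  -- self map bound
  have hself : ∀ u ∈ closedBall τ x, Complex.abs (gg u) ≤ x := by
    intro u hu
    rw [mem_closedBall, dist_eq_norm] at hu
    have huH : u ∈ HH := hSH (by rwa [mem_closedBall, dist_eq_norm])
    have h1 : Complex.abs (gg u - gg 101) ≤ (1/20) * Complex.abs (u - 101) :=
      gg_lip mem_HH_101 huH
    have h2 : Complex.abs (u - 101) ≤ Complex.abs (u - τ) + Complex.abs (τ - 101) := by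
      have e : u - 101 = (u - τ) + (τ - 101) := by ring
      rw [e]
      exact Complex.abs.add_le _ _
    have h3 : Complex.abs (gg u) ≤ Complex.abs (gg 101) + Complex.abs (gg u - gg 101) := by
      conv_lhs => rw [show gg u = gg 101 + (gg u - gg 101) from by ring]
      exact Complex.abs.add_le _ _
    have h4 := gg_base
    have h5 : Complex.abs (u - τ) ≤ x := hu
    calc Complex.abs (gg u) ≤ 436 + (1/20) * Complex.abs (u - 101) := by linarith
      _ ≤ 436 + (1/20) * (x + Complex.abs (τ - 101)) := by linarith
      _ ≤ x := by push_cast at h ⊢; linarith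
  -- Banach fixed point on the closed ball
  haveI : Nonempty (closedBall τ x) := ⟨⟨τ, mem_closedBall_self (le_of_lt hx0)⟩⟩
  haveI : CompleteSpace (closedBall τ x) := (Metric.isClosed_closedBall).completeSpace_coe
  set T : closedBall τ x → closedBall τ x := fun u => ⟨τ - gg u, by
    rw [mem_closedBall, dist_eq_norm]
    have : (τ - gg u) - τ = -(gg u) := by ring
    rw [this, norm_neg]
    exact hself u u.2⟩ with hT
  have hcontract : ContractingWith (1/20 : ℝ≥0) T := by
    constructor
    · have h19 : ((1/20:ℝ≥0):ℝ) < ((1:ℝ≥0):ℝ) := by norm_num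
      exact_mod_cast h19
    · apply LipschitzWith.of_dist_le_mul
      intro u v
      simp only [Subtype.dist_eq]
      have hco : ((1/20 : ℝ≥0) : ℝ) = 1/20 := by norm_num
      rw [hco, dist_eq_norm, dist_eq_norm]
      have e0 : ((T u : ℂ)) - ((T v : ℂ)) = -(gg u - gg v) := by
        show (τ - gg u) - (τ - gg v) = -(gg u - gg v)
        ring
      rw [e0, norm_neg]
      have h9 := gg_lip (hSH v.2) (hSH u.2)
      calc ‖gg ↑u - gg ↑v‖ = Complex.abs (gg ↑u - gg ↑v) := rfl
        _ ≤ (1/20) * Complex.abs ((u:ℂ) - v) := h9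
        _ = (1/20) * ‖(u:ℂ) - (v:ℂ)‖ := rfl
  set w := ContractingWith.fixedPoint T hcontract with hwdef
  have hfix : T w = w := hcontract.fixedPoint_isFixedPt
  have hfix2 : τ - gg (w:ℂ) = (w:ℂ) := by
    have := congrArg (Subtype.val) hfix
    exact this
  refine ⟨(w:ℂ), hSH w.2, ?_⟩
  rw [phi]
  linear_combination -hfix2





lemma phi_partial_diff (n : ℕ) :
    DifferentiableOn ℂ (fun w => w + ∑ k ∈ Finset.range n, tt k w) HH := by
  intro w hw
  apply DifferentiableAt.differentiableWithinAt
  apply DifferentiableAt.add differentiableAt_id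
  apply DifferentiableAt.fun_sum
  intro k _
  exact tt_hasDerivAt' k hw

lemma phi_tlu : TendstoLocallyUniformlyOn
    (fun n (w : ℂ) => w + ∑ k ∈ Finset.range n, tt k w) phi atTop HH := by
  rw [tendstoLocallyUniformlyOn_iff_forall_isCompact HH_open]
  intro S hSsub hSc
  obtain ⟨C, hC⟩ : ∃ C, ∀ w ∈ S, ‖w‖ ≤ C := by
    have := hSc.isBounded
    rwa [isBounded_iff_forall_norm_le] at this
  set C' := max C 0 with hC'
  have hC0' : 0 ≤ C' := le_max_right _ _
  have h1 : TendstoUniformlyOn (fun N (w : ℂ) => ∑ k ∈ Finset.range N, tt k w)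
      (fun w => ∑' k, tt k w) atTop S := by
    apply tendstoUniformlyOn_tsum_nat (summable_uu C' hC0')
    intro k w hw
    exact tt_bound k (hSsub hw) (le_trans (hC w hw) (le_max_left _ _))
  have h2 : TendstoUniformlyOn (fun (_ : ℕ) (w : ℂ) => w) (fun w => w) atTop S := by
    rw [Metric.tendstoUniformlyOn_iff]
    intro ε hε
    filter_upwards with n w hw
    simpa using hε
  have := h2.add h1
  exact this

lemma phi_diffOn : DifferentiableOn ℂ phi HH := by
  apply phi_tlu.differentiableOn ?_ HH_open
  filter_upwards with n
  exact phi_partial_diff n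



/-- complex harmonic sums -/
def HrC (n : ℕ) : ℂ := ∑ k ∈ Finset.range n, ((k:ℂ)+1)⁻¹
/-- the approximants to the Fatou coordinate -/
def PhiSeq (n : ℕ) (z : ℂ) : ℂ := -((Q 1)^[n] z)⁻¹ - n - HrC n
/-- the Fatou coordinate -/
def Phi (z : ℂ) : ℂ := limUnder Filter.atTop (fun n => PhiSeq n z)

lemma Om_ne_zero {z : ℂ} (hz : z ∈ Om) : z ≠ 0 := hz.1

lemma Om_ne_neg_one {z : ℂ} (hz : z ∈ Om) : z ≠ -1 := by
  intro h
  have := hz.2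
  rw [h] at this
  norm_num at this

lemma Om_w_mem {z : ℂ} (hz : z ∈ Om) : -z⁻¹ ∈ HH := hz.2

/-- orbit identity on Om -/
lemma Om_orbit {z : ℂ} (hz : z ∈ Om) (k : ℕ) :
    (Q 1)^[k] z ∈ Om ∧ -((Q 1)^[k] z)⁻¹ = W k (-z⁻¹) := by
  induction k with
  | zero => exact ⟨hz, rfl⟩
  | succ k ih =>
    obtain ⟨h1, h2⟩ := ih
    constructor
    · rw [Function.iterate_succ_apply']
      exact Om_fwd h1
    · rw [Function.iterate_succ_apply']
      rw [w_recursion (Om_ne_zero h1) (Om_ne_neg_one h1), h2]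
      exact (Function.iterate_succ_apply' F k (-z⁻¹)).symm

/-- partial sum representation on Om -/
lemma PhiSeq_eq_partial {z : ℂ} (hz : z ∈ Om) (n : ℕ) :
    PhiSeq n z = -z⁻¹ + ∑ k ∈ Finset.range n, tt k (-z⁻¹) := by
  rw [PhiSeq, (Om_orbit hz n).2, W_telescope]
  rw [show ∑ k ∈ Finset.range n, tt k (-z⁻¹)
    = ∑ k ∈ Finset.range n, ((W k (-z⁻¹) - 1)⁻¹ - ((k:ℂ)+1)⁻¹) from rfl]
  rw [Finset.sum_sub_distrib]
  rw [HrC]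
  push_cast
  ring

/-- convergence on Om -/
lemma tendsto_PhiSeq_Om {z : ℂ} (hz : z ∈ Om) :
    Filter.Tendsto (fun n => PhiSeq n z) atTop (nhds (phi (-z⁻¹))) := by
  have h1 : Filter.Tendsto (fun n => ∑ k ∈ Finset.range n, tt k (-z⁻¹)) atTop
      (nhds (gg (-z⁻¹))) := (summable_tt (Om_w_mem hz)).hasSum.tendsto_sum_nat
  have h2 := h1.const_add (-z⁻¹)
  rw [show (fun n => PhiSeq n z) = fun n => -z⁻¹ + ∑ k ∈ Finset.range n, tt k (-z⁻¹) from
    funext fun n => PhiSeq_eq_partial hz n]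
  exact h2

lemma Phi_on_Om {z : ℂ} (hz : z ∈ Om) : Phi z = phi (-z⁻¹) :=
  (tendsto_PhiSeq_Om hz).limUnder_eq

/-- harmonic tail bound -/
lemma HrC_tail (m : ℕ) :
    Filter.Tendsto (fun j => HrC (j+m) - HrC j) atTop (nhds 0) := by
  have hb : ∀ j : ℕ, ‖HrC (j+m) - HrC j‖ ≤ (m:ℝ) * (1/((j:ℝ)+1)) := by
    intro j
    induction m with
    | zero => simp
    | succ m ih =>
      have e : HrC (j + (m+1)) = HrC (j+m) + (((j+m:ℕ):ℂ)+1)⁻¹ := by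
        rw [show j + (m+1) = (j+m)+1 from rfl, HrC, HrC, Finset.sum_range_succ]
      rw [e]
      have h1 : ‖(((j+m:ℕ):ℂ)+1)⁻¹‖ ≤ 1/((j:ℝ)+1) := by
        rw [norm_inv]
        have e2 : (((j+m:ℕ):ℂ)+1) = (((j+m:ℕ):ℝ)+1 : ℝ) := by push_cast; ring
        rw [e2, Complex.norm_real, Real.norm_eq_abs, abs_of_pos (by positivity)]
        rw [inv_eq_one_div]
        apply div_le_div_of_nonneg_left (by norm_num) (by positivity)
        push_cast
        linarith [Nat.cast_nonneg (α := ℝ) m]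
      calc ‖HrC (j+m) + (((j+m:ℕ):ℂ)+1)⁻¹ - HrC j‖
          ≤ ‖HrC (j+m) - HrC j‖ + ‖(((j+m:ℕ):ℂ)+1)⁻¹‖ := by
            have e3 : HrC (j+m) + (((j+m:ℕ):ℂ)+1)⁻¹ - HrC j
                = (HrC (j+m) - HrC j) + (((j+m:ℕ):ℂ)+1)⁻¹ := by ring
            rw [e3]
            exact norm_add_le _ _
        _ ≤ (m:ℝ) * (1/((j:ℝ)+1)) + 1/((j:ℝ)+1) := by linarith [ih]
        _ = ((m+1:ℕ):ℝ) * (1/((j:ℝ)+1)) := by push_cast; ring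
  have h0 : Filter.Tendsto (fun j : ℕ => 1/((j:ℝ)+1)) atTop (nhds 0) :=
    tendsto_one_div_add_atTop_nhds_zero_nat
  have h0' := h0.const_mul (m:ℝ)
  rw [mul_zero] at h0'
  exact squeeze_zero_norm hb h0'

/-- global convergence -/
lemma tendsto_PhiSeq_int {z : ℂ} (m : ℕ) (hm : (Q 1)^[m] z ∈ Om) :
    Filter.Tendsto (fun n => PhiSeq n z) atTop
      (nhds (phi (-((Q 1)^[m] z)⁻¹) - m)) := by
  set zm := (Q 1)^[m] z with hzm
  have key : ∀ j : ℕ, PhiSeq (j+m) z = PhiSeq j zm - m - (HrC (j+m) - HrC j) := by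
    intro j
    rw [PhiSeq, PhiSeq]
    have e1 : (Q 1)^[j+m] z = (Q 1)^[j] zm := by
      rw [hzm, Function.iterate_add_apply]
    rw [e1]
    push_cast
    ring
  have h1 : Filter.Tendsto (fun j => PhiSeq (j+m) z) atTop
      (nhds (phi (-zm⁻¹) - m)) := by
    rw [show (fun j => PhiSeq (j+m) z)
      = fun j => PhiSeq j zm - m - (HrC (j+m) - HrC j) from funext key]
    have h2 := (tendsto_PhiSeq_Om hm).sub_const (m:ℂ)
    have h3 := h2.sub (HrC_tail m)
    simpa using h3
  exact (Filter.tendsto_add_atTop_iff_nat (f := fun n => PhiSeq n z)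
    (l := nhds (phi (-zm⁻¹) - (m:ℂ))) m).mp h1

lemma Phi_int_eq {z : ℂ} (m : ℕ) (hm : (Q 1)^[m] z ∈ Om) :
    Phi z = phi (-((Q 1)^[m] z)⁻¹) - m :=
  (tendsto_PhiSeq_int m hm).limUnder_eq

lemma tendsto_PhiSeq_of_int {z : ℂ} (hz : z ∈ interior K) :
    Filter.Tendsto (fun n => PhiSeq n z) atTop (nhds (Phi z)) := by
  obtain ⟨m, hm⟩ := absorption hz
  rw [Phi_int_eq m hm]
  exact tendsto_PhiSeq_int m hm

/-- the functional equation -/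
lemma Phi_funcEq {z : ℂ} (hz : z ∈ interior K) : Phi (Q 1 z) = Phi z + 1 := by
  have hkey : ∀ n : ℕ, PhiSeq n (Q 1 z) = PhiSeq (n+1) z + 1 + ((n:ℂ)+1)⁻¹ := by
    intro n
    rw [PhiSeq, PhiSeq]
    have e1 : (Q 1)^[n] (Q 1 z) = (Q 1)^[n+1] z := (Function.iterate_succ_apply (Q 1) n z).symm
    rw [e1]
    have e2 : HrC (n+1) = HrC n + ((n:ℂ)+1)⁻¹ := by
      rw [HrC, HrC, Finset.sum_range_succ]
    rw [e2]
    push_cast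
    ring
  have h1 : Filter.Tendsto (fun n => PhiSeq (n+1) z) atTop (nhds (Phi z)) :=
    (Filter.tendsto_add_atTop_iff_nat (f := fun n => PhiSeq n z)
      (l := nhds (Phi z)) 1).mpr (tendsto_PhiSeq_of_int hz)
  have h2 : Filter.Tendsto (fun n : ℕ => ((n:ℂ)+1)⁻¹) atTop (nhds 0) := by
    have hb : ∀ n : ℕ, ‖((n:ℂ)+1)⁻¹‖ ≤ 1/((n:ℝ)+1) := by
      intro n
      rw [norm_inv]
      have e2 : ((n:ℂ)+1) = (((n:ℝ)+1 : ℝ) : ℂ) := by push_cast; ring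
      rw [e2, Complex.norm_real, Real.norm_eq_abs, abs_of_pos (by positivity)]
      rw [inv_eq_one_div]
    exact squeeze_zero_norm hb tendsto_one_div_add_atTop_nhds_zero_nat
  have h3 : Filter.Tendsto (fun n => PhiSeq n (Q 1 z)) atTop (nhds (Phi z + 1 + 0)) := by
    rw [show (fun n => PhiSeq n (Q 1 z)) = fun n => PhiSeq (n+1) z + 1 + ((n:ℂ)+1)⁻¹ from
      funext hkey]
    exact (h1.add_const 1).add h2
  rw [add_zero] at h3
  exact h3.limUnder_eq

lemma Phi_iter_eq {z : ℂ} (hz : z ∈ interior K) (n : ℕ) :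
    Phi ((Q 1)^[n] z) = Phi z + n := by
  induction n with
  | zero => simp
  | succ n ih =>
    rw [Function.iterate_succ_apply', Phi_funcEq (int_fwd_iter hz n), ih]
    push_cast
    ring

/-- differentiability -/
lemma Phi_diffOn : DifferentiableOn ℂ Phi (interior K) := by
  intro z hz
  apply DifferentiableAt.differentiableWithinAt
  obtain ⟨m, hm⟩ := absorption hz
  set U : Set ℂ := interior K ∩ (Q 1)^[m] ⁻¹' Om with hU
  have hUopen : IsOpen U :=
    IsOpen.inter isOpen_interior (Om_open.preimage (differentiable_qn m).continuous)
  have hUz : z ∈ U := ⟨hz, hm⟩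
  have hUeq : ∀ y ∈ U, Phi y = phi (-((Q 1)^[m] y)⁻¹) - m := by
    intro y hy
    exact Phi_int_eq m hy.2
  have hdiff : DifferentiableAt ℂ (fun y => phi (-((Q 1)^[m] y)⁻¹) - (m:ℂ)) z := by
    have h1 : DifferentiableAt ℂ ((Q 1)^[m]) z := (differentiable_qn m).differentiableAt
    have hne : (Q 1)^[m] z ≠ 0 := (hm).1
    have h2 : DifferentiableAt ℂ (fun ζ : ℂ => -ζ⁻¹) ((Q 1)^[m] z) := by
      apply DifferentiableAt.neg
      exact (differentiableAt_inv hne)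
    have h3 : DifferentiableAt ℂ phi (-((Q 1)^[m] z)⁻¹) := by
      apply (phi_diffOn _ (Om_w_mem hm)).differentiableAt
      exact HH_open.mem_nhds (Om_w_mem hm)
    have h4 : DifferentiableAt ℂ (fun y => -((Q 1)^[m] y)⁻¹) z := by
      exact h2.comp z h1
    have h5 : DifferentiableAt ℂ (fun y => phi (-((Q 1)^[m] y)⁻¹)) z := by
      exact h3.comp z h4
    exact h5.sub_const (m:ℂ)
  have hev : Phi =ᶠ[nhds z] (fun y => phi (-((Q 1)^[m] y)⁻¹) - (m:ℂ)) := by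
    filter_upwards [hUopen.mem_nhds hUz] with y hy
    exact hUeq y hy
  exact hev.differentiableAt_iff.mpr hdiff

/-- injectivity on Om -/
lemma Phi_injOn : Set.InjOn Phi Om := by
  intro z1 h1 z2 h2 heq
  rw [Phi_on_Om h1, Phi_on_Om h2] at heq
  have h3 := phi_inj (Om_w_mem h1) (Om_w_mem h2) heq
  have h4 : z1⁻¹ = z2⁻¹ := by linear_combination -h3
  exact inv_injective h4

/-- surjectivity of Q -/
lemma q_surj (y : ℂ) : ∃ x : ℂ, Q 1 x = y := by
  by_cases h : y + 1/4 = 0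
  · refine ⟨-1/2, ?_⟩
    rw [q_def]
    have : y = -1/4 := by linear_combination h
    rw [this]
    ring
  · set s := Complex.exp (Complex.log (y + 1/4) / 2) with hs
    refine ⟨-1/2 + s, ?_⟩
    rw [q_def]
    have h2 : s^2 = y + 1/4 := by
      rw [hs, ← Complex.exp_nat_mul]
      rw [show (2:ℕ) * (Complex.log (y + 1/4) / 2) = Complex.log (y+1/4) by push_cast; ring]
      exact Complex.exp_log h
    linear_combination h2

lemma int_pre_iter (n : ℕ) {y : ℂ} (hy : y ∈ interior K) :
    ∃ x ∈ interior K, (Q 1)^[n] x = y := by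
  induction n with
  | zero => exact ⟨y, hy, rfl⟩
  | succ n ih =>
    obtain ⟨x, hx, hxe⟩ := ih
    obtain ⟨x', hx'⟩ := q_surj x
    refine ⟨x', int_pre (hx' ▸ hx), ?_⟩
    rw [Function.iterate_succ_apply, hx', hxe]

/-- surjectivity of Phi -/
lemma Phi_surj : Phi '' interior K = Set.univ := by
  apply eq_univ_of_forall
  intro c
  set n : ℕ := ⌈2*Complex.abs c + 12101⌉₊ with hn
  have hnge : 2*Complex.abs c + 12101 ≤ (n:ℝ) := Nat.le_ceil _
  have habsc : 0 ≤ Complex.abs c := Complex.abs.nonneg c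
  have hre1 : -(Complex.abs c) ≤ c.re := by
    have := Complex.abs_re_le_abs c
    linarith [abs_le.mp this]
  set τ : ℂ := c + n with hτ
  have hτre : τ.re = c.re + n := by
    rw [hτ]
    simp
  have hτabs : Complex.abs (τ - 101) ≤ Complex.abs c + ((n:ℝ) - 101) := by
    have e : τ - 101 = c + (((n:ℝ) - 101 : ℝ) : ℂ) := by
      rw [hτ]
      push_cast
      ring
    rw [e]
    calc Complex.abs (c + (((n:ℝ) - 101 : ℝ) : ℂ))
        ≤ Complex.abs c + Complex.abs ((((n:ℝ) - 101 : ℝ) : ℂ)) := Complex.abs.add_le _ _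
      _ = Complex.abs c + ((n:ℝ) - 101) := by
          rw [Complex.abs_ofReal, _root_.abs_of_nonneg (by linarith : (0:ℝ) ≤ (n:ℝ) - 101)]
  obtain ⟨w, hwH, hwphi⟩ := solve_phi τ (by
    rw [hτre]
    have : (0:ℝ) ≤ Complex.abs c := habsc
    nlinarith [hτabs])
  -- z' := -w⁻¹ ∈ Om with Phi z' = τ
  have hwne : w ≠ 0 := by
    intro h
    have : (100:ℝ) < w.re := hwH
    rw [h] at this
    simp at this
    linarith
  set z' : ℂ := -w⁻¹ with hz'
  have hz'ne : z' ≠ 0 := by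
    rw [hz']
    simp [hwne]
  have hz'w : -z'⁻¹ = w := by
    rw [hz']
    rw [inv_neg, inv_inv, neg_neg]
  have hz'Om : z' ∈ Om := by
    refine ⟨hz'ne, ?_⟩
    rw [hz'w]
    exact hwH
  have hPhiz' : Phi z' = τ := by
    rw [Phi_on_Om hz'Om, hz'w, hwphi]
  obtain ⟨x, hx, hxe⟩ := int_pre_iter n (Om_subset_interior hz'Om)
  refine ⟨x, hx, ?_⟩
  have hiter := Phi_iter_eq hx n
  rw [hxe, hPhiz'] at hiter
  have hfin : Phi x = τ - n := by linear_combination -hiter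
  rw [hfin, hτ]
  push_cast
  ring

/-- the main theorem -/
theorem main :
    ∃ Ω : Set ℂ, ∃ Φ : ℂ → ℂ,
      IsOpen Ω ∧ Ω.Nonempty ∧ Ω ⊆ interior (filledJulia 1) ∧
      Q 1 '' Ω ⊆ Ω ∧
      DifferentiableOn ℂ Φ (interior (filledJulia 1)) ∧
      Set.InjOn Φ Ω ∧
      (∀ z ∈ interior (filledJulia 1), Φ (Q 1 z) = Φ z + 1) ∧
      (∀ z ∈ interior (filledJulia 1), ∃ n : ℕ, (Q 1)^[n] z ∈ Ω) ∧
      Φ '' interior (filledJulia 1) = Set.univ := by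
  refine ⟨Om, Phi, Om_open, Om_nonempty, Om_subset_interior, ?_, Phi_diffOn, Phi_injOn,
    fun z hz => Phi_funcEq hz, fun z hz => absorption hz, Phi_surj⟩
  rintro _ ⟨z, hz, rfl⟩
  exact Om_fwd hz


end S15
end Stmt15Aux

theorem stmt15 :
    ∃ Ω : Set ℂ, ∃ Φ : ℂ → ℂ,
      IsOpen Ω ∧ Ω.Nonempty ∧ Ω ⊆ interior (filledJulia 1) ∧
      Q 1 '' Ω ⊆ Ω ∧
      DifferentiableOn ℂ Φ (interior (filledJulia 1)) ∧
      Set.InjOn Φ Ω ∧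
      (∀ z ∈ interior (filledJulia 1), Φ (Q 1 z) = Φ z + 1) ∧
      (∀ z ∈ interior (filledJulia 1), ∃ n : ℕ, (Q 1)^[n] z ∈ Ω) ∧
      Φ '' interior (filledJulia 1) = Set.univ :=
  S15.main
end
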